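/- arXiv:2405.09937 — 5 statements merged into one kernel-verified Lean document; each statement's English description precedes it below -/
import Mathlib

section
/- Let θ ∈ (0,1), C > 0 and N₀ > 0. Let L, H, N : [0,∞) → [0,∞) with L differentiable, and suppose that for every t ≥ 0: (i) L'(t) + H(t) ≤ 0; (ii) N(t) ≤ N₀; (iii) L(t) ≤ C·H(t)^θ·N(t)^{1−θ}. Then, setting c₀ := C^{−1/θ}·N₀^{1−1/θ}, one has for every t ≥ 0: L(t) ≤ L(0)·(1 + ((1−θ)/θ)·c₀·L(0)^{(1−θ)/θ}·t)^{−θ/(1−θ)}. -/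
open Real

/-- Nash-type decay mechanism: a differentiable Lyapunov functional `L` with dissipation
rate `H`, a lower-order functional `N` bounded by `N₀`, and the interpolation inequality
`L ≤ C·H^θ·N^(1-θ)` imply the algebraic decay of `L`. -/
theorem stmt0 (θ C N₀ : ℝ) (hθ : θ ∈ Set.Ioo (0 : ℝ) 1) (hC : 0 < C) (hN₀ : 0 < N₀)
    (L H N : ℝ → ℝ) (hLdiff : Differentiable ℝ L)
    (hLnn : ∀ t, 0 ≤ t → 0 ≤ L t) (hHnn : ∀ t, 0 ≤ t → 0 ≤ H t)
    (hNnn : ∀ t, 0 ≤ t → 0 ≤ N t)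
    (hdiss : ∀ t, 0 ≤ t → deriv L t + H t ≤ 0)
    (hNbound : ∀ t, 0 ≤ t → N t ≤ N₀)
    (hinterp : ∀ t, 0 ≤ t → L t ≤ C * H t ^ θ * N t ^ (1 - θ)) :
    ∀ t, 0 ≤ t →
      L t ≤ L 0 *
        (1 + (1 - θ) / θ * (C ^ (-(1 / θ)) * N₀ ^ (1 - 1 / θ)) * L 0 ^ ((1 - θ) / θ) * t)
          ^ (-(θ / (1 - θ))) := by
  obtain ⟨hθ0, hθ1⟩ := hθ
  intro t ht
  set c₀ : ℝ := C ^ (-(1 / θ)) * N₀ ^ (1 - 1 / θ) with hc₀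
  have hc₀pos : 0 < c₀ := mul_pos (rpow_pos_of_pos hC _) (rpow_pos_of_pos hN₀ _)
  set α : ℝ := (1 - θ) / θ with hα
  have hαpos : 0 < α := div_pos (by linarith) hθ0
  have hL0 : 0 ≤ L 0 := hLnn 0 le_rfl
  have hbase : 0 < 1 + α * c₀ * L 0 ^ α * t := by
    have : 0 ≤ α * c₀ * L 0 ^ α * t := by
      have := rpow_nonneg hL0 α
      positivity
    linarith
  -- key differential inequality
  have hkey : ∀ s, 0 ≤ s → c₀ * L s ^ (1 / θ) ≤ H s := by
    intro s hs
    have hHs := hHnn s hs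
    have hNle : N s ^ (1 - θ) ≤ N₀ ^ (1 - θ) :=
      rpow_le_rpow (hNnn s hs) (hNbound s hs) (by linarith)
    have h1 : L s ≤ C * H s ^ θ * N₀ ^ (1 - θ) :=
      (hinterp s hs).trans (mul_le_mul_of_nonneg_left hNle (by positivity))
    have h2 : L s ^ (1 / θ) ≤ (C * H s ^ θ * N₀ ^ (1 - θ)) ^ (1 / θ) :=
      rpow_le_rpow (hLnn s hs) h1 (by positivity)
    have hHθθ : (H s ^ θ) ^ (1 / θ) = H s := by
      rw [← rpow_mul hHs, mul_one_div, div_self hθ0.ne', rpow_one]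
    have hNθθ : (N₀ ^ (1 - θ)) ^ (1 / θ) = N₀ ^ ((1 - θ) / θ) := by
      rw [← rpow_mul hN₀.le, mul_one_div]
    have h3 : (C * H s ^ θ * N₀ ^ (1 - θ)) ^ (1 / θ)
        = C ^ (1 / θ) * H s * N₀ ^ ((1 - θ) / θ) := by
      rw [mul_rpow (by positivity) (rpow_nonneg hN₀.le _),
        mul_rpow hC.le (rpow_nonneg hHs _), hHθθ, hNθθ]
    have h4 : c₀ * (C ^ (1 / θ) * N₀ ^ ((1 - θ) / θ)) = 1 := by
      rw [hc₀, show C ^ (-(1/θ)) * N₀ ^ (1 - 1/θ) * (C ^ (1/θ) * N₀ ^ ((1-θ)/θ))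
          = (C ^ (-(1/θ)) * C ^ (1/θ)) * (N₀ ^ (1 - 1/θ) * N₀ ^ ((1-θ)/θ)) from by ring,
        ← rpow_add hC, ← rpow_add hN₀,
        show -(1/θ) + 1/θ = 0 from by ring,
        show (1 - 1/θ) + (1-θ)/θ = 0 from by field_simp; ring,
        rpow_zero, rpow_zero, mul_one]
    have h5 : c₀ * L s ^ (1 / θ) ≤ c₀ * (C ^ (1 / θ) * H s * N₀ ^ ((1 - θ) / θ)) := by
      rw [← h3]; exact mul_le_mul_of_nonneg_left h2 hc₀pos.le
    have h6 : c₀ * (C ^ (1 / θ) * H s * N₀ ^ ((1 - θ) / θ))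
        = c₀ * (C ^ (1 / θ) * N₀ ^ ((1 - θ) / θ)) * H s := by ring
    rw [h6, h4, one_mul] at h5
    exact h5
  have hderivL : ∀ s, 0 ≤ s → deriv L s ≤ -(c₀ * L s ^ (1 / θ)) := by
    intro s hs
    have := hdiss s hs
    have := hkey s hs
    linarith
  -- L is antitone on [0, ∞)
  have hanti : AntitoneOn L (Set.Ici 0) := by
    apply antitoneOn_of_deriv_nonpos (convex_Ici 0) hLdiff.continuous.continuousOn
      hLdiff.differentiableOn
    intro x hx
    rw [interior_Ici] at hx
    have h1 := hdiss x hx.le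
    have h2 := hHnn x hx.le
    linarith
  rcases le_or_gt (L t) 0 with hLt | hLt
  · have : 0 ≤ L 0 * (1 + α * c₀ * L 0 ^ α * t) ^ (-(θ / (1 - θ))) := by
      have := rpow_nonneg (le_of_lt hbase) (-(θ / (1 - θ)))
      positivity
    linarith
  -- L positive on [0, t]
  have hLpos : ∀ s ∈ Set.Icc (0:ℝ) t, 0 < L s := by
    intro s hs
    exact lt_of_lt_of_le hLt (hanti hs.1 (le_trans hs.1 hs.2) hs.2)
  have hL0pos : 0 < L 0 := hLpos 0 ⟨le_rfl, ht⟩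
  -- φ(s) = L s ^ (-α) - α c₀ s is monotone on [0, t]
  set φ : ℝ → ℝ := fun s => L s ^ (-α) - α * c₀ * s with hφ
  have hφderiv : ∀ x ∈ Set.Ioo (0:ℝ) t,
      HasDerivAt φ (deriv L x * (-α) * L x ^ (-α - 1) - α * c₀) x := by
    intro x hx
    have hLx : 0 < L x := hLpos x ⟨hx.1.le, hx.2.le⟩
    have h1 : HasDerivAt (fun s => L s ^ (-α)) (deriv L x * (-α) * L x ^ (-α - 1)) x :=
      (hLdiff x).hasDerivAt.rpow_const (Or.inl hLx.ne')
    have h2 : HasDerivAt (fun s : ℝ => α * c₀ * s) (α * c₀) x := by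
      simpa using (hasDerivAt_id x).const_mul (α * c₀)
    exact h1.sub h2
  have hmono : MonotoneOn φ (Set.Icc 0 t) := by
    apply monotoneOn_of_deriv_nonneg (convex_Icc 0 t)
    · apply ContinuousOn.sub
      · exact ContinuousOn.rpow_const hLdiff.continuous.continuousOn
          (fun x hx => Or.inl (hLpos x hx).ne')
      · exact (continuous_const.mul continuous_id).continuousOn
    · intro x hx
      rw [interior_Icc] at hx
      exact ((hφderiv x hx).differentiableAt).differentiableWithinAt
    · intro x hx
      rw [interior_Icc] at hx
      rw [(hφderiv x hx).deriv]
      have hLx : 0 < L x := hLpos x ⟨hx.1.le, hx.2.le⟩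
      have h1 : deriv L x ≤ -(c₀ * L x ^ (1 / θ)) := hderivL x hx.1.le
      have h2 : α * c₀ * L x ^ (1 / θ) ≤ deriv L x * (-α) := by nlinarith
      have h3 : 0 < L x ^ (-α - 1) := rpow_pos_of_pos hLx _
      have h4 : α * c₀ * L x ^ (1 / θ) * L x ^ (-α - 1)
          ≤ deriv L x * (-α) * L x ^ (-α - 1) :=
        mul_le_mul_of_nonneg_right h2 h3.le
      have h5 : L x ^ (1 / θ) * L x ^ (-α - 1) = 1 := by
        rw [← rpow_add hLx]
        have : 1 / θ + (-α - 1) = 0 := by rw [hα]; field_simp; ring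
        rw [this, rpow_zero]
      have h6 : α * c₀ * L x ^ (1 / θ) * L x ^ (-α - 1) = α * c₀ := by
        rw [mul_assoc (α * c₀), h5, mul_one]
      linarith
  have hineq : L 0 ^ (-α) + α * c₀ * t ≤ L t ^ (-α) := by
    have := hmono (Set.left_mem_Icc.mpr ht) (Set.right_mem_Icc.mpr ht) ht
    simp only [hφ, mul_zero, sub_zero] at this
    linarith
  -- invert
  have hfact : L 0 ^ (-α) + α * c₀ * t = L 0 ^ (-α) * (1 + α * c₀ * L 0 ^ α * t) := by
    have : L 0 ^ (-α) * L 0 ^ α = 1 := by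
      rw [← rpow_add hL0pos, neg_add_cancel, rpow_zero]
    calc L 0 ^ (-α) + α * c₀ * t
        = L 0 ^ (-α) + (L 0 ^ (-α) * L 0 ^ α) * (α * c₀ * t) := by rw [this]; ring
      _ = L 0 ^ (-α) * (1 + α * c₀ * L 0 ^ α * t) := by ring
  have hLtα : 0 < L t ^ (-α) := rpow_pos_of_pos hLt _
  have hL0α : 0 < L 0 ^ (-α) := rpow_pos_of_pos hL0pos _
  have hexp : -(θ / (1 - θ)) = -(1 / α) := by
    rw [hα]; field_simp
  have hstep : (L t ^ (-α)) ^ (-(1/α)) ≤ (L 0 ^ (-α) * (1 + α * c₀ * L 0 ^ α * t)) ^ (-(1/α)) := by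
    exact rpow_le_rpow_of_nonpos (mul_pos hL0α hbase) (by rw [← hfact]; exact hineq)
      (neg_nonpos.mpr (le_of_lt (one_div_pos.mpr hαpos)))
  have hlhs : (L t ^ (-α)) ^ (-(1/α)) = L t := by
    rw [← rpow_mul hLt.le]
    have : -α * -(1/α) = 1 := by field_simp
    rw [this, rpow_one]
  have hrhs : (L 0 ^ (-α) * (1 + α * c₀ * L 0 ^ α * t)) ^ (-(1/α))
      = L 0 * (1 + α * c₀ * L 0 ^ α * t) ^ (-(1/α)) := by
    rw [mul_rpow hL0α.le hbase.le, ← rpow_mul hL0pos.le]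
    have : -α * -(1/α) = 1 := by field_simp
    rw [this, rpow_one]
  rw [hexp]
  rw [hlhs, hrhs] at hstep
  exact hstep
end

section
/- There exists a constant C > 0 with the following property: for every measurable f : ℝ³×ℝ³ → [0,∞) such that ∫∫ f(x,v)(1+‖v‖²) dv dx < ∞ and the function x ↦ ∫ f(x,v) dv is essentially bounded, and for every continuously differentiable u : ℝ³ → ℝ³ with compact support, one has ∫_{ℝ³}∫_{ℝ³} f(x,v)·‖u(x) − v‖² dv dx ≥ (1/2)·∫_{ℝ³}∫_{ℝ³} f(x,v)·‖v‖² dv dx − C·(∫∫ f dv dx)^{2/3}·(ess sup_x ∫ f(x,v) dv)^{1/3}·∫_{ℝ³} ‖∇u(x)‖² dx. -/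
open MeasureTheory

noncomputable section

abbrev E3 := EuclideanSpace ℝ (Fin 3)

private lemma auxB (ρ : E3 → ℝ) (u : E3 → E3) (hρm : Measurable ρ) (hρ0 : ∀ x, 0 ≤ ρ x)
    (hρint : Integrable ρ (volume : Measure E3))
    (hS : essSup (fun x => ENNReal.ofReal (ρ x)) volume < ⊤)
    (hu : ContDiff ℝ 1 u) (h2u : HasCompactSupport u) :
    (∫ x : E3, ρ x * ‖u x‖ ^ 2)
      ≤ ((eLpNormLESNormFDerivOfEqInnerConst (volume : Measure E3) ((2:NNReal):ℝ) : ℝ) ^ 2)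
        * (∫ x : E3, ρ x) ^ ((2:ℝ)/3)
        * (essSup (fun x => ENNReal.ofReal (ρ x)) volume).toReal ^ ((1:ℝ)/3)
        * (∫ x : E3, ‖fderiv ℝ u x‖ ^ 2) := by
  set K : NNReal := eLpNormLESNormFDerivOfEqInnerConst (volume : Measure E3) ((2:NNReal):ℝ)
    with hKdef
  set S : ENNReal := essSup (fun x => ENNReal.ofReal (ρ x)) volume with hSdef
  have hSne : S ≠ ⊤ := hS.ne
  have hgm : Measurable fun x => ENNReal.ofReal (ρ x) := ENNReal.measurable_ofReal.comp hρm
  have hwm : Measurable fun x : E3 => ENNReal.ofReal (‖u x‖ ^ 2) :=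
    ENNReal.measurable_ofReal.comp ((hu.continuous.norm.pow 2).measurable)
  have hcont_du : Continuous (fderiv ℝ u) := hu.continuous_fderiv one_ne_zero
  have hcs_du : HasCompactSupport (fderiv ℝ u) := h2u.fderiv (𝕜 := ℝ)
  have hDint : Integrable (fun x : E3 => ‖fderiv ℝ u x‖ ^ 2) (volume : Measure E3) := by
    apply (hcont_du.norm.pow 2).integrable_of_hasCompactSupport
    exact (hcs_du.norm.comp_left (g := fun t : ℝ => t ^ 2) (by norm_num) : HasCompactSupport ((fun t : ℝ => t ^ 2) ∘ fun x => ‖fderiv ℝ u x‖))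
  have hI00 : 0 ≤ ∫ x : E3, ρ x := integral_nonneg hρ0
  have hD0 : 0 ≤ ∫ x : E3, ‖fderiv ℝ u x‖ ^ 2 := integral_nonneg fun x => by positivity
  -- real integral = lintegral
  have hmeas : Measurable fun x => ρ x * ‖u x‖ ^ 2 :=
    hρm.mul ((hu.continuous.norm.pow 2).measurable)
  have heq : (∫ x : E3, ρ x * ‖u x‖ ^ 2)
      = (∫⁻ x : E3, ENNReal.ofReal (ρ x) * ENNReal.ofReal (‖u x‖ ^ 2)).toReal := by
    rw [integral_eq_lintegral_of_nonneg_ae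
      (ae_of_all _ fun x => mul_nonneg (hρ0 x) (by positivity)) hmeas.aestronglyMeasurable]
    congr 1
    exact lintegral_congr fun x => ENNReal.ofReal_mul (hρ0 x)
  -- Hölder with exponents 3/2 and 3
  have hpq : Real.HolderConjugate (3/2) 3 := Real.holderConjugate_iff.mpr ⟨by norm_num, by norm_num⟩
  have holder := ENNReal.lintegral_mul_le_Lp_mul_Lq volume hpq hgm.aemeasurable hwm.aemeasurable
  simp only [Pi.mul_apply] at holder
  rw [show (1:ℝ) / (3/2) = 2/3 by norm_num] at holder
  -- interpolation for the g-factor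
  have hIg : (∫⁻ x, ENNReal.ofReal (ρ x)) = ENNReal.ofReal (∫ x : E3, ρ x) :=
    (ofReal_integral_eq_lintegral_ofReal hρint (ae_of_all _ hρ0)).symm
  have hinterp : (∫⁻ x, ENNReal.ofReal (ρ x) ^ ((3:ℝ)/2))
      ≤ S ^ ((1:ℝ)/2) * ENNReal.ofReal (∫ x : E3, ρ x) := by
    rw [← hIg]
    calc (∫⁻ x, ENNReal.ofReal (ρ x) ^ ((3:ℝ)/2))
        ≤ ∫⁻ x, S ^ ((1:ℝ)/2) * ENNReal.ofReal (ρ x) := by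
          refine lintegral_mono_ae ?_
          filter_upwards [ae_le_essSup (f := fun x => ENNReal.ofReal (ρ x))] with x hx
          have h1 : ENNReal.ofReal (ρ x) ^ ((3:ℝ)/2)
              = ENNReal.ofReal (ρ x) ^ ((1:ℝ)/2) * ENNReal.ofReal (ρ x) ^ (1:ℝ) := by
            rw [← ENNReal.rpow_add_of_nonneg _ _ (by norm_num) (by norm_num)]
            norm_num
          rw [h1, ENNReal.rpow_one]
          exact mul_le_mul' (ENNReal.rpow_le_rpow hx (by norm_num)) le_rfl
      _ = S ^ ((1:ℝ)/2) * ∫⁻ x, ENNReal.ofReal (ρ x) := lintegral_const_mul _ hgm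
  -- Sobolev for the u-factor
  have hsob : eLpNorm u ((6:NNReal) : ENNReal) volume
      ≤ (K : ENNReal) * eLpNorm (fderiv ℝ u) ((2:NNReal) : ENNReal) volume := by
    refine eLpNorm_le_eLpNorm_fderiv_of_eq_inner (volume : Measure E3) hu h2u
      (p := 2) (p' := 6) (by norm_num) ?_ ?_
    · rw [finrank_euclideanSpace_fin]; norm_num
    · rw [finrank_euclideanSpace_fin]; norm_num
  have hsn6 : eLpNorm u ((6:NNReal) : ENNReal) volume
      = (∫⁻ x, ((‖u x‖₊ : ENNReal)) ^ (6:ℝ)) ^ ((1:ℝ)/6) := by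
    rw [eLpNorm_eq_lintegral_rpow_enorm_toReal (by norm_num) (by norm_num)]
    norm_num; rfl
  have hsn2 : eLpNorm (fderiv ℝ u) ((2:NNReal) : ENNReal) volume
      = (∫⁻ x, ((‖fderiv ℝ u x‖₊ : ENNReal)) ^ (2:ℝ)) ^ ((1:ℝ)/2) := by
    rw [eLpNorm_eq_lintegral_rpow_enorm_toReal (by norm_num) (by norm_num)]
    norm_num; rfl
  have hw3 : ∀ x : E3, ENNReal.ofReal (‖u x‖ ^ 2) ^ (3:ℝ) = ((‖u x‖₊ : ENNReal)) ^ (6:ℝ) := by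
    intro x
    rw [show (‖u x‖ ^ 2 : ℝ) = ‖u x‖ ^ (2:ℝ) by rw [← Real.rpow_natCast ‖u x‖ 2]; norm_num,
      ← ENNReal.ofReal_rpow_of_nonneg (norm_nonneg _) (by norm_num),
      ofReal_norm, ← ENNReal.rpow_mul]
    norm_num; rfl
  have hDof : (∫⁻ x, ((‖fderiv ℝ u x‖₊ : ENNReal)) ^ (2:ℝ))
      = ENNReal.ofReal (∫ x : E3, ‖fderiv ℝ u x‖ ^ 2) := by
    rw [ofReal_integral_eq_lintegral_ofReal hDint (ae_of_all _ fun x => by positivity)]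
    refine lintegral_congr fun x => ?_
    rw [show (‖fderiv ℝ u x‖ ^ 2 : ℝ) = ‖fderiv ℝ u x‖ ^ (2:ℝ) by
        rw [← Real.rpow_natCast ‖fderiv ℝ u x‖ 2]; norm_num,
      ← ENNReal.ofReal_rpow_of_nonneg (norm_nonneg _) (by norm_num),
      ofReal_norm]; rfl
  have hwbound : (∫⁻ x, ENNReal.ofReal (‖u x‖ ^ 2) ^ (3:ℝ)) ^ ((1:ℝ)/3)
      ≤ (K : ENNReal) ^ (2:ℝ) * ENNReal.ofReal (∫ x : E3, ‖fderiv ℝ u x‖ ^ 2) := by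
    have e1 : (∫⁻ x, ENNReal.ofReal (‖u x‖ ^ 2) ^ (3:ℝ)) ^ ((1:ℝ)/3)
        = (eLpNorm u ((6:NNReal) : ENNReal) volume) ^ (2:ℝ) := by
      rw [hsn6, ← ENNReal.rpow_mul]
      congr 1
      · exact lintegral_congr hw3
      · norm_num
    have e2 : (eLpNorm (fderiv ℝ u) ((2:NNReal) : ENNReal) volume) ^ (2:ℝ)
        = ENNReal.ofReal (∫ x : E3, ‖fderiv ℝ u x‖ ^ 2) := by
      rw [hsn2, ← ENNReal.rpow_mul, ← hDof]
      norm_num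
    calc (∫⁻ x, ENNReal.ofReal (‖u x‖ ^ 2) ^ (3:ℝ)) ^ ((1:ℝ)/3)
        = (eLpNorm u ((6:NNReal) : ENNReal) volume) ^ (2:ℝ) := e1
      _ ≤ ((K : ENNReal) * eLpNorm (fderiv ℝ u) ((2:NNReal) : ENNReal) volume) ^ (2:ℝ) :=
          ENNReal.rpow_le_rpow hsob (by norm_num)
      _ = (K : ENNReal) ^ (2:ℝ) *
            (eLpNorm (fderiv ℝ u) ((2:NNReal) : ENNReal) volume) ^ (2:ℝ) :=
          ENNReal.mul_rpow_of_nonneg _ _ (by norm_num)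
      _ = (K : ENNReal) ^ (2:ℝ) * ENNReal.ofReal (∫ x : E3, ‖fderiv ℝ u x‖ ^ 2) := by rw [e2]
  -- combine in ℝ≥0∞
  have hgbound : (∫⁻ x, ENNReal.ofReal (ρ x) ^ ((3:ℝ)/2)) ^ ((2:ℝ)/3)
      ≤ S ^ ((1:ℝ)/3) * ENNReal.ofReal (∫ x : E3, ρ x) ^ ((2:ℝ)/3) := by
    calc (∫⁻ x, ENNReal.ofReal (ρ x) ^ ((3:ℝ)/2)) ^ ((2:ℝ)/3)
        ≤ (S ^ ((1:ℝ)/2) * ENNReal.ofReal (∫ x : E3, ρ x)) ^ ((2:ℝ)/3) :=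
          ENNReal.rpow_le_rpow hinterp (by norm_num)
      _ = (S ^ ((1:ℝ)/2)) ^ ((2:ℝ)/3) * ENNReal.ofReal (∫ x : E3, ρ x) ^ ((2:ℝ)/3) :=
          ENNReal.mul_rpow_of_nonneg _ _ (by norm_num)
      _ = S ^ ((1:ℝ)/3) * ENNReal.ofReal (∫ x : E3, ρ x) ^ ((2:ℝ)/3) := by
          rw [← ENNReal.rpow_mul]; norm_num
  have main : (∫⁻ x : E3, ENNReal.ofReal (ρ x) * ENNReal.ofReal (‖u x‖ ^ 2))
      ≤ (K : ENNReal) ^ (2:ℝ) * ENNReal.ofReal (∫ x : E3, ρ x) ^ ((2:ℝ)/3)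
        * S ^ ((1:ℝ)/3) * ENNReal.ofReal (∫ x : E3, ‖fderiv ℝ u x‖ ^ 2) := by
    calc (∫⁻ x : E3, ENNReal.ofReal (ρ x) * ENNReal.ofReal (‖u x‖ ^ 2))
        ≤ (∫⁻ x, ENNReal.ofReal (ρ x) ^ ((3:ℝ)/2)) ^ ((2:ℝ)/3)
            * (∫⁻ x, ENNReal.ofReal (‖u x‖ ^ 2) ^ (3:ℝ)) ^ ((1:ℝ)/3) := holder
      _ ≤ (S ^ ((1:ℝ)/3) * ENNReal.ofReal (∫ x : E3, ρ x) ^ ((2:ℝ)/3))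
            * ((K : ENNReal) ^ (2:ℝ) * ENNReal.ofReal (∫ x : E3, ‖fderiv ℝ u x‖ ^ 2)) :=
          mul_le_mul' hgbound hwbound
      _ = (K : ENNReal) ^ (2:ℝ) * ENNReal.ofReal (∫ x : E3, ρ x) ^ ((2:ℝ)/3)
            * S ^ ((1:ℝ)/3) * ENNReal.ofReal (∫ x : E3, ‖fderiv ℝ u x‖ ^ 2) := by ring
  -- take toReal
  have hfin : (K : ENNReal) ^ (2:ℝ) * ENNReal.ofReal (∫ x : E3, ρ x) ^ ((2:ℝ)/3)
        * S ^ ((1:ℝ)/3) * ENNReal.ofReal (∫ x : E3, ‖fderiv ℝ u x‖ ^ 2) ≠ ⊤ := by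
    apply ENNReal.mul_ne_top
    apply ENNReal.mul_ne_top
    apply ENNReal.mul_ne_top
    · exact ENNReal.rpow_ne_top_of_nonneg (by norm_num) ENNReal.coe_ne_top
    · exact ENNReal.rpow_ne_top_of_nonneg (by norm_num) ENNReal.ofReal_ne_top
    · exact ENNReal.rpow_ne_top_of_nonneg (by norm_num) hSne
    · exact ENNReal.ofReal_ne_top
  have := ENNReal.toReal_mono hfin main
  rw [heq]
  refine le_trans this (le_of_eq ?_)
  rw [ENNReal.toReal_mul, ENNReal.toReal_mul, ENNReal.toReal_mul,
    ← ENNReal.toReal_rpow, ← ENNReal.toReal_rpow, ← ENNReal.toReal_rpow,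
    ENNReal.toReal_ofReal hI00, ENNReal.toReal_ofReal hD0, ENNReal.coe_toReal]
  have : ((K : ℝ)) ^ (2:ℝ) = (K : ℝ) ^ 2 := by
    rw [← Real.rpow_natCast (K : ℝ) 2]; norm_num
  rw [this]

/-- Lower bound comparing the relative kinetic energy `∫∫ f ‖u - v‖²` with the kinetic
energy `∫∫ f ‖v‖²`, via the interpolation `‖ρ‖_{L^{3/2}} ≤ ‖ρ‖_{L¹}^{2/3} ‖ρ‖_{L^∞}^{1/3}`
for `ρ(x) = ∫ f(x,v) dv` and the Sobolev embedding `Ḣ¹(ℝ³) ↪ L⁶(ℝ³)`. -/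
theorem stmt6 : ∃ C > 0, ∀ (f : E3 × E3 → ℝ) (u : E3 → E3),
    Measurable f → (∀ p, 0 ≤ f p) →
    Integrable (fun p : E3 × E3 => f p * (1 + ‖p.2‖ ^ 2)) →
    essSup (fun x => ENNReal.ofReal (∫ v : E3, f (x, v))) volume < ⊤ →
    ContDiff ℝ 1 u → HasCompactSupport u →
    (1 / 2) * (∫ x : E3, ∫ v : E3, f (x, v) * ‖v‖ ^ 2)
        - C * (∫ x : E3, ∫ v : E3, f (x, v)) ^ ((2 : ℝ) / 3) *
          (essSup (fun x => ENNReal.ofReal (∫ v : E3, f (x, v))) volume).toReal ^ ((1 : ℝ) / 3) *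
          (∫ x : E3, ‖fderiv ℝ u x‖ ^ 2)
      ≤ ∫ x : E3, ∫ v : E3, f (x, v) * ‖u x - v‖ ^ 2 := by
  refine ⟨(eLpNormLESNormFDerivOfEqInnerConst (volume : Measure E3) ((2:NNReal):ℝ) : ℝ) ^ 2 + 1,
    by positivity, ?_⟩
  set K : NNReal := eLpNormLESNormFDerivOfEqInnerConst (volume : Measure E3) ((2:NNReal):ℝ)
    with hKdef
  intro f u hf hf0 hI hS hu h2u
  have hρ0 : ∀ x : E3, 0 ≤ ∫ v : E3, f (x, v) := fun x => integral_nonneg fun v => hf0 _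
  have hρm : Measurable fun x : E3 => ∫ v : E3, f (x, v) :=
    (hf.stronglyMeasurable.integral_prod_right').measurable
  -- boundedness of u
  obtain ⟨B, hB⟩ := h2u.exists_bound_of_continuous hu.continuous
  have hB0 : (0:ℝ) ≤ B := le_trans (norm_nonneg _) (hB 0)
  -- integrabilities on the product space
  have hIprod : Integrable (fun p : E3 × E3 => f p * (1 + ‖p.2‖ ^ 2))
      ((volume : Measure E3).prod volume) := by
    rwa [← Measure.volume_eq_prod]
  have hint1 : Integrable f ((volume : Measure E3).prod volume) := by
    refine hIprod.mono hf.aestronglyMeasurable (ae_of_all _ fun p => ?_)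
    have h1 := hf0 p; have h2 : (0:ℝ) ≤ ‖p.2‖ := norm_nonneg _
    rw [Real.norm_eq_abs, Real.norm_eq_abs, abs_of_nonneg h1, abs_of_nonneg (by positivity)]
    nlinarith
  have hm2 : Measurable fun p : E3 × E3 => f p * ‖p.2‖ ^ 2 :=
    hf.mul ((measurable_snd.norm).pow measurable_const)
  have hint2 : Integrable (fun p : E3 × E3 => f p * ‖p.2‖ ^ 2)
      ((volume : Measure E3).prod volume) := by
    refine hIprod.mono hm2.aestronglyMeasurable (ae_of_all _ fun p => ?_)
    have h1 := hf0 p; have h2 : (0:ℝ) ≤ ‖p.2‖ := norm_nonneg _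
    rw [Real.norm_eq_abs, Real.norm_eq_abs, abs_of_nonneg (by positivity),
      abs_of_nonneg (by positivity)]
    nlinarith
  have hm3 : Measurable fun p : E3 × E3 => f p * ‖u p.1 - p.2‖ ^ 2 :=
    hf.mul ((((hu.continuous.comp continuous_fst).sub continuous_snd).norm.pow 2).measurable)
  have hint3 : Integrable (fun p : E3 × E3 => f p * ‖u p.1 - p.2‖ ^ 2)
      ((volume : Measure E3).prod volume) := by
    refine (hIprod.const_mul (2 * B ^ 2 + 2)).mono hm3.aestronglyMeasurable
      (ae_of_all _ fun p => ?_)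
    have h1 := hf0 p
    have h2 : ‖u p.1 - p.2‖ ≤ B + ‖p.2‖ := by
      calc ‖u p.1 - p.2‖ ≤ ‖u p.1‖ + ‖p.2‖ := norm_sub_le _ _
      _ ≤ B + ‖p.2‖ := by linarith [hB p.1]
    have h3 : (0:ℝ) ≤ ‖u p.1 - p.2‖ := norm_nonneg _
    have h4 : (0:ℝ) ≤ ‖p.2‖ := norm_nonneg _
    have h5 : ‖u p.1 - p.2‖ ^ 2 ≤ 2 * B ^ 2 + 2 * ‖p.2‖ ^ 2 := by
      nlinarith [sq_nonneg (B - ‖p.2‖)]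
    rw [Real.norm_eq_abs, Real.norm_eq_abs, abs_of_nonneg (by positivity),
      abs_of_nonneg (by positivity)]
    nlinarith [mul_le_mul_of_nonneg_left h5 h1, mul_nonneg h1 (mul_nonneg (sq_nonneg B) (sq_nonneg ‖p.2‖))]
  have hm4 : Measurable fun p : E3 × E3 => f p * ‖u p.1‖ ^ 2 :=
    hf.mul (((hu.continuous.comp continuous_fst).norm.pow 2).measurable)
  have hint4 : Integrable (fun p : E3 × E3 => f p * ‖u p.1‖ ^ 2)
      ((volume : Measure E3).prod volume) := by
    refine (hint1.const_mul (B ^ 2)).mono hm4.aestronglyMeasurable (ae_of_all _ fun p => ?_)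
    have h1 := hf0 p
    have h2 := hB p.1
    have h3 : (0:ℝ) ≤ ‖u p.1‖ := norm_nonneg _
    rw [Real.norm_eq_abs, Real.norm_eq_abs, abs_of_nonneg (by positivity),
      abs_of_nonneg (by positivity)]
    nlinarith [mul_le_mul_of_nonneg_left (mul_self_le_mul_self h3 h2) h1]
  have hρint : Integrable (fun x : E3 => ∫ v : E3, f (x, v)) (volume : Measure E3) :=
    hint1.integral_prod_left
  -- Step A
  have key : ∀ p : E3 × E3,
      (1/2 : ℝ) * (f p * ‖p.2‖ ^ 2) - f p * ‖u p.1‖ ^ 2 ≤ f p * ‖u p.1 - p.2‖ ^ 2 := by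
    intro p
    have h1 := hf0 p
    have h2 : ‖p.2‖ ≤ ‖u p.1‖ + ‖u p.1 - p.2‖ := by
      calc ‖p.2‖ = ‖u p.1 - (u p.1 - p.2)‖ := by congr 1; abel
      _ ≤ ‖u p.1‖ + ‖u p.1 - p.2‖ := norm_sub_le _ _
    have h3 : (0:ℝ) ≤ ‖u p.1‖ := norm_nonneg _
    have h4 : (0:ℝ) ≤ ‖u p.1 - p.2‖ := norm_nonneg _
    have h0 : (0:ℝ) ≤ ‖p.2‖ := norm_nonneg _
    have h5 : ‖p.2‖ ^ 2 ≤ 2 * ‖u p.1‖ ^ 2 + 2 * ‖u p.1 - p.2‖ ^ 2 := by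
      nlinarith [sq_nonneg (‖u p.1‖ - ‖u p.1 - p.2‖), mul_self_le_mul_self h0 h2]
    nlinarith [mul_le_mul_of_nonneg_left h5 h1]
  have e2 : (∫ x : E3, ∫ v : E3, f (x, v) * ‖v‖ ^ 2)
      = ∫ p : E3 × E3, f p * ‖p.2‖ ^ 2 ∂((volume : Measure E3).prod volume) :=
    integral_integral hint2
  have e3 : (∫ x : E3, ∫ v : E3, f (x, v) * ‖u x - v‖ ^ 2)
      = ∫ p : E3 × E3, f p * ‖u p.1 - p.2‖ ^ 2 ∂((volume : Measure E3).prod volume) :=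
    integral_integral hint3
  have e4a : (∫ x : E3, ∫ v : E3, f (x, v) * ‖u x‖ ^ 2)
      = ∫ p : E3 × E3, f p * ‖u p.1‖ ^ 2 ∂((volume : Measure E3).prod volume) :=
    integral_integral hint4
  have e4b : (∫ x : E3, ∫ v : E3, f (x, v) * ‖u x‖ ^ 2)
      = ∫ x : E3, (∫ v : E3, f (x, v)) * ‖u x‖ ^ 2 := by
    congr 1
    ext x
    exact integral_mul_const _ _
  have stepA : (1/2 : ℝ) * (∫ x : E3, ∫ v : E3, f (x, v) * ‖v‖ ^ 2)
      - (∫ x : E3, (∫ v : E3, f (x, v)) * ‖u x‖ ^ 2)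
      ≤ ∫ x : E3, ∫ v : E3, f (x, v) * ‖u x - v‖ ^ 2 := by
    have h := integral_mono ((hint2.const_mul (1/2)).sub hint4) hint3 key
    simp only [Pi.sub_apply, integral_sub (hint2.const_mul (1/2)) hint4, integral_const_mul] at h
    rw [e2, e3, ← e4b, e4a]
    exact h
  -- Step B
  have stepB : (∫ x : E3, (∫ v : E3, f (x, v)) * ‖u x‖ ^ 2)
      ≤ ((K : ℝ) ^ 2) * (∫ x : E3, ∫ v : E3, f (x, v)) ^ ((2:ℝ)/3)
        * (essSup (fun x => ENNReal.ofReal (∫ v : E3, f (x, v))) volume).toReal ^ ((1:ℝ)/3)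
        * (∫ x : E3, ‖fderiv ℝ u x‖ ^ 2) :=
    auxB (fun x => ∫ v : E3, f (x, v)) u hρm hρ0 hρint hS hu h2u
  -- combine
  have hA0 : (0:ℝ) ≤ (∫ x : E3, ∫ v : E3, f (x, v)) ^ ((2:ℝ)/3) :=
    Real.rpow_nonneg (integral_nonneg hρ0) _
  have hM0 : (0:ℝ) ≤
      (essSup (fun x => ENNReal.ofReal (∫ v : E3, f (x, v))) volume).toReal ^ ((1:ℝ)/3) :=
    Real.rpow_nonneg ENNReal.toReal_nonneg _
  have hD0 : (0:ℝ) ≤ ∫ x : E3, ‖fderiv ℝ u x‖ ^ 2 := integral_nonneg fun x => by positivity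
  have hprod0 : (0:ℝ) ≤ (∫ x : E3, ∫ v : E3, f (x, v)) ^ ((2:ℝ)/3)
      * (essSup (fun x => ENNReal.ofReal (∫ v : E3, f (x, v))) volume).toReal ^ ((1:ℝ)/3)
      * (∫ x : E3, ‖fderiv ℝ u x‖ ^ 2) :=
    mul_nonneg (mul_nonneg hA0 hM0) hD0
  nlinarith [stepA, stepB, hprod0]
end
end

section
/- Let k ∈ ℕ and let q > k + 3 be real. There exists a constant C > 0, depending only on q and k, with the following property: for all N ≥ 0, A ≥ 0, t ≥ 0, every measurable g : ℝ³ → [0,∞), and every V : ℝ³ → ℝ³ such that for all v ∈ ℝ³ one has g(v)·(1 + ‖V(v)‖²)^{q/2} ≤ N and ‖v‖ ≤ e^{−t}·‖V(v)‖ + A, it holds that ∫_{ℝ³} ‖v‖^k·g(v) dv ≤ C·(1 + A)^q·N. -/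
open MeasureTheory

noncomputable section

/-- Moment estimate along characteristics: if `g(v) (1 + ‖V(v)‖²)^{q/2} ≤ N` and
`‖v‖ ≤ e^{-t} ‖V(v)‖ + A` for all `v`, then `∫ ‖v‖^k g(v) dv ≤ C (1+A)^q N`,
with `C` depending only on `q > k + 3` and `k`. -/
theorem stmt13 (k : ℕ) (q : ℝ) (hq : (k : ℝ) + 3 < q) :
    ∃ C > 0, ∀ (N A t : ℝ) (g : E3 → ℝ) (V : E3 → E3),
      0 ≤ N → 0 ≤ A → 0 ≤ t → Measurable g → (∀ v, 0 ≤ g v) →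
      (∀ v : E3, g v * (1 + ‖V v‖ ^ 2) ^ (q / 2) ≤ N) →
      (∀ v : E3, ‖v‖ ≤ Real.exp (-t) * ‖V v‖ + A) →
      (∫⁻ v : E3, ENNReal.ofReal (‖v‖ ^ k * g v))
        ≤ ENNReal.ofReal (C * (1 + A) ^ q * N) := by
  have hfin : (Module.finrank ℝ E3 : ℝ) < q - k := by
    simp [finrank_euclideanSpace_fin]; linarith
  set I : ENNReal := ∫⁻ v : E3, ENNReal.ofReal ((1 + ‖v‖) ^ (-(q - k))) with hIdef
  have hI : I < ⊤ := finite_integral_one_add_norm hfin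
  refine ⟨(2 : ℝ) ^ (q / 2) * (I.toReal + 1), by positivity, ?_⟩
  intro N A t g V hN hA ht hgm hg hNb hVb
  have hq0 : (0:ℝ) < q := lt_of_le_of_lt (by positivity) hq
  have hT : (0 : ℝ) ≤ (2 : ℝ) ^ (q / 2) * (1 + A) ^ q := by positivity
  -- pointwise bound
  have key : ∀ v : E3, ‖v‖ ^ k * g v ≤
      (2 : ℝ) ^ (q / 2) * (1 + A) ^ q * N * (1 + ‖v‖) ^ (-(q - k)) := by
    intro v
    set s := ‖v‖ with hs
    set w := ‖V v‖ with hw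
    have hs0 : 0 ≤ s := norm_nonneg _
    have hw0 : 0 ≤ w := norm_nonneg _
    have h1 : 1 + s ≤ 1 + A + w := by
      have h := hVb v
      have he : Real.exp (-t) ≤ 1 := Real.exp_le_one_iff.2 (by linarith)
      nlinarith [Real.exp_pos (-t)]
    have h2 : (1 + s) ^ 2 ≤ 2 * (1 + A) ^ 2 * (1 + w ^ 2) := by
      nlinarith [sq_nonneg (1 + A - w), sq_nonneg (A * w), sq_nonneg w]
    have h3 : (1 + s) ^ q ≤ (2 : ℝ) ^ (q / 2) * (1 + A) ^ q * (1 + w ^ 2) ^ (q / 2) := by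
      have := Real.rpow_le_rpow (by positivity) h2 (by linarith : (0:ℝ) ≤ q / 2)
      have e1 : (((1 + s) ^ 2 : ℝ)) ^ (q / 2) = (1 + s) ^ q := by
        rw [← Real.rpow_natCast (1 + s) 2, ← Real.rpow_mul (by positivity),
          show ((2:ℕ):ℝ) * (q / 2) = q by push_cast; ring]
      have e2 : ((2 * (1 + A) ^ 2 * (1 + w ^ 2) : ℝ)) ^ (q / 2)
          = (2 : ℝ) ^ (q / 2) * (1 + A) ^ q * (1 + w ^ 2) ^ (q / 2) := by
        rw [Real.mul_rpow (by positivity) (by positivity),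
          Real.mul_rpow (by positivity) (by positivity),
          ← Real.rpow_natCast (1 + A) 2, ← Real.rpow_mul (by positivity),
          show ((2:ℕ):ℝ) * (q / 2) = q by push_cast; ring]
      rw [e1] at this; rw [e2] at this; exact this
    have hskP : s ^ k * (1 + s) ^ (q - k) ≤ (1 + s) ^ q := by
      have h4 : s ^ k ≤ (1 + s) ^ k := by
        exact pow_le_pow_left₀ hs0 (by linarith) k
      have h5 : ((1 + s) ^ k : ℝ) * (1 + s) ^ (q - k) = (1 + s) ^ q := by
        rw [← Real.rpow_natCast (1 + s) k, ← Real.rpow_add (by positivity)]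
        ring_nf
      calc s ^ k * (1 + s) ^ (q - k) ≤ (1 + s) ^ k * (1 + s) ^ (q - k) :=
            mul_le_mul_of_nonneg_right h4 (by positivity)
        _ = (1 + s) ^ q := h5
    have hgv := hg v
    have hgR := hNb v
    have hR0 : (0 : ℝ) ≤ (1 + w ^ 2) ^ (q / 2) := by positivity
    have hmain : s ^ k * g v * (1 + s) ^ (q - k)
        ≤ (2 : ℝ) ^ (q / 2) * (1 + A) ^ q * N := by
      calc s ^ k * g v * (1 + s) ^ (q - k)
          = (s ^ k * (1 + s) ^ (q - k)) * g v := by ring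
        _ ≤ (1 + s) ^ q * g v := mul_le_mul_of_nonneg_right hskP hgv
        _ ≤ ((2 : ℝ) ^ (q / 2) * (1 + A) ^ q * (1 + w ^ 2) ^ (q / 2)) * g v :=
            mul_le_mul_of_nonneg_right h3 hgv
        _ = ((2 : ℝ) ^ (q / 2) * (1 + A) ^ q) * (g v * (1 + w ^ 2) ^ (q / 2)) := by ring
        _ ≤ ((2 : ℝ) ^ (q / 2) * (1 + A) ^ q) * N := mul_le_mul_of_nonneg_left hgR hT
    have hP : (0 : ℝ) < (1 + s) ^ (q - k) := Real.rpow_pos_of_pos (by positivity) _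
    have := (le_div_iff₀ hP).2 hmain
    calc s ^ k * g v ≤ (2 : ℝ) ^ (q / 2) * (1 + A) ^ q * N / (1 + s) ^ (q - k) := this
      _ = (2 : ℝ) ^ (q / 2) * (1 + A) ^ q * N * (1 + s) ^ (-(q - k)) := by
          rw [Real.rpow_neg (by positivity), div_eq_mul_inv]
  -- integrate
  have step1 : (∫⁻ v : E3, ENNReal.ofReal (‖v‖ ^ k * g v))
      ≤ ∫⁻ v : E3, ENNReal.ofReal ((2 : ℝ) ^ (q / 2) * (1 + A) ^ q * N)
          * ENNReal.ofReal ((1 + ‖v‖) ^ (-(q - k))) := by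
    refine lintegral_mono fun v => ?_
    rw [← ENNReal.ofReal_mul (by positivity)]
    exact ENNReal.ofReal_le_ofReal (key v)
  rw [lintegral_const_mul' _ _ ENNReal.ofReal_ne_top] at step1
  refine step1.trans ?_
  have hIle : I ≤ ENNReal.ofReal (I.toReal + 1) :=
    calc I = ENNReal.ofReal I.toReal := (ENNReal.ofReal_toReal hI.ne).symm
      _ ≤ ENNReal.ofReal (I.toReal + 1) := ENNReal.ofReal_le_ofReal (by linarith)
  calc ENNReal.ofReal ((2 : ℝ) ^ (q / 2) * (1 + A) ^ q * N) * I
      ≤ ENNReal.ofReal ((2 : ℝ) ^ (q / 2) * (1 + A) ^ q * N)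
          * ENNReal.ofReal (I.toReal + 1) := mul_le_mul_right hIle _
    _ = ENNReal.ofReal ((2 : ℝ) ^ (q / 2) * (I.toReal + 1) * (1 + A) ^ q * N) := by
        rw [← ENNReal.ofReal_mul (by positivity)]; ring_nf
end
end

section
/- Let T > 0. Suppose f : [0,T] × ℝ³ × ℝ³ → [0,∞) is continuously differentiable with f(t,x,v) = 0 for (x,v) outside a fixed compact subset of ℝ³ × ℝ³, and u : [0,T] × ℝ³ → ℝ³, P : [0,T] × ℝ³ → ℝ are twice continuously differentiable with u(t,x) = 0 and P(t,x) = 0 for x outside a fixed compact subset of ℝ³. Assume that pointwise: ∂_t f + v·∇_x f + div_v((u − v)·f) = 0; ∂_t u + (u·∇_x)u − Δ_x u + ∇_x P = ∫_{ℝ³} (v − u(t,x))·f(t,x,v) dv; and div_x u = 0. Then for every t ∈ (0,T) the function E₀(t) := (1/2)∫_{ℝ³} ‖u(t,x)‖² dx + (1/2)∫_{ℝ³}∫_{ℝ³} ‖v‖²·f(t,x,v) dv dx is differentiable and E₀'(t) = −∫_{ℝ³} ‖∇_x u(t,x)‖² dx − ∫_{ℝ³}∫_{ℝ³} ‖u(t,x)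 − v‖²·f(t,x,v) dv dx. -/
open MeasureTheory
open scoped RealInnerProductSpace

noncomputable section

lemma pi_div_integral_zero (G : (Fin 3 → ℝ) → (Fin 3 → ℝ)) (hG : ContDiff ℝ 1 G)
    (hsupp : HasCompactSupport G) :
    ∫ x : Fin 3 → ℝ, ∑ i : Fin 3, fderiv ℝ G x (Pi.single i 1) i = 0 := by
  obtain ⟨r, hr⟩ := hsupp.isBounded.subset_ball (0 : Fin 3 → ℝ)
  set R : ℝ := max r 1 with hR
  have hRpos : (0:ℝ) < R := lt_of_lt_of_le one_pos (le_max_right _ _)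
  have hsub : tsupport G ⊆ Metric.ball (0 : Fin 3 → ℝ) R :=
    hr.trans (Metric.ball_subset_ball (le_max_left _ _))
  set a : Fin 3 → ℝ := fun _ => -R
  set b : Fin 3 → ℝ := fun _ => R
  have hle : a ≤ b := fun i => by simp [a, b]; linarith
  have hdivcont : Continuous fun x => ∑ i : Fin 3, fderiv ℝ G x (Pi.single i 1) i := by
    refine continuous_finset_sum _ (fun i _ => ?_)
    have h1 : Continuous fun x => fderiv ℝ G x := hG.continuous_fderiv one_ne_zero
    exact (continuous_pi_iff.mp ((ContinuousLinearMap.apply ℝ (Fin 3 → ℝ) (Pi.single i (1:ℝ))).continuous.comp h1)) i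
  have key := MeasureTheory.integral_divergence_of_hasFDerivAt_off_countable (n := 2) a b hle G
    (fun x => fderiv ℝ G x) ∅ Set.countable_empty hG.continuous.continuousOn
    (fun x _ => (hG.differentiable one_ne_zero x).hasFDerivAt)
    (hdivcont.continuousOn.integrableOn_compact isCompact_Icc)
  have hnorm : ∀ y : Fin 3 → ℝ, ∀ i, |y i| ≤ ‖y‖ := by
    intro y i
    exact le_trans (by simp) (norm_le_pi_norm y i)
  have hGzero : ∀ y : Fin 3 → ℝ, R ≤ ‖y‖ → G y = 0 := by
    intro y hy
    apply image_eq_zero_of_notMem_tsupport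
    intro hmem
    have := hsub hmem
    simp [Metric.mem_ball, dist_zero_right] at this
    linarith
  -- faces vanish
  have hfaces : ∀ i : Fin 3,
      ((∫ x in Set.Icc (a ∘ Fin.succAbove i) (b ∘ Fin.succAbove i), G (Fin.insertNth (α := fun _ => ℝ) i (b i) x) i)
        - ∫ x in Set.Icc (a ∘ Fin.succAbove i) (b ∘ Fin.succAbove i), G (Fin.insertNth (α := fun _ => ℝ) i (a i) x) i) = 0 := by
    intro i
    have h1 : ∀ x : Fin 2 → ℝ, G (Fin.insertNth (α := fun _ => ℝ) i (b i) x) i = 0 := by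
      intro x
      have hsame : (Fin.insertNth (α := fun _ => ℝ) i (b i) x) i = b i := Fin.insertNth_apply_same (α := fun _ => ℝ) i (b i) x
      rw [hGzero _ ?_]; · rfl
      · refine le_trans ?_ (hnorm (Fin.insertNth (α := fun _ => ℝ) i (b i) x) i)
        rw [hsame]
        simp [b, abs_of_nonneg hRpos.le]
    have h2 : ∀ x : Fin 2 → ℝ, G (Fin.insertNth (α := fun _ => ℝ) i (a i) x) i = 0 := by
      intro x
      have hsame : (Fin.insertNth (α := fun _ => ℝ) i (a i) x) i = a i := Fin.insertNth_apply_same (α := fun _ => ℝ) i (a i) x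
      rw [hGzero _ ?_]; · rfl
      · refine le_trans ?_ (hnorm (Fin.insertNth (α := fun _ => ℝ) i (a i) x) i)
        rw [hsame]
        simp [a, abs_of_nonneg hRpos.le]
    simp [h1, h2]
  rw [Finset.sum_congr rfl (fun i _ => hfaces i), Finset.sum_const, smul_zero] at key
  rw [← MeasureTheory.setIntegral_eq_integral_of_forall_compl_eq_zero (s := Set.Icc a b) ?_]
  · exact key
  · intro x hx
    have : ∃ i, x i < a i ∨ b i < x i := by
      by_contra h
      push_neg at h
      exact hx ⟨fun i => (h i).1, fun i => (h i).2⟩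
    obtain ⟨i, hi⟩ := this
    have hxnorm : R < ‖x‖ := by
      rcases hi with h | h
      · have h' : x i < -R := h
        calc R < -(x i) := by linarith
          _ ≤ |x i| := neg_le_abs _
          _ ≤ ‖x‖ := hnorm _ _
      · calc R = b i := rfl
          _ < |x i| := lt_of_lt_of_le h (le_abs_self _)
          _ ≤ ‖x‖ := hnorm _ _
    have hfz : fderiv ℝ G x = 0 := by
      by_contra h
      have := support_fderiv_subset ℝ (f := G) (Function.mem_support.mpr h)
      have h2 := hsub this
      simp [Metric.mem_ball, dist_zero_right] at h2
      linarith
    simp [hfz]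

lemma div_integral_zero (F : E3 → E3) (hF : ContDiff ℝ 1 F) (hsupp : HasCompactSupport F) :
    ∫ x : E3, ∑ i : Fin 3, fderiv ℝ F x (EuclideanSpace.single i 1) i = 0 := by
  set φ : (Fin 3 → ℝ) ≃L[ℝ] E3 := (EuclideanSpace.equiv (Fin 3) ℝ).symm with hφ
  set ψ : E3 ≃L[ℝ] (Fin 3 → ℝ) := EuclideanSpace.equiv (Fin 3) ℝ with hψ
  set G : (Fin 3 → ℝ) → (Fin 3 → ℝ) := fun x => ψ (F (φ x)) with hGdef
  have hG : ContDiff ℝ 1 G := (ψ.contDiff.comp hF).comp φ.contDiff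
  have hGsupp : HasCompactSupport G := by
    have h1 : HasCompactSupport (fun y : E3 => ψ (F y)) :=
      hsupp.comp_left (g := ψ) (map_zero ψ)
    exact h1.comp_homeomorph φ.toHomeomorph
  have hfd : ∀ x : Fin 3 → ℝ, fderiv ℝ G x =
      ((ψ : E3 →L[ℝ] (Fin 3 → ℝ)).comp ((fderiv ℝ F (φ x)).comp (φ : (Fin 3 → ℝ) →L[ℝ] E3))) := by
    intro x
    have h1 : HasFDerivAt G (((ψ : E3 →L[ℝ] (Fin 3 → ℝ)).comp
        ((fderiv ℝ F (φ x)).comp (φ : (Fin 3 → ℝ) →L[ℝ] E3)))) x := by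
      exact (ψ.hasFDerivAt.comp _ ((hF.differentiable one_ne_zero (φ x)).hasFDerivAt.comp x φ.hasFDerivAt))
    exact h1.fderiv
  have hdiv : ∀ x : Fin 3 → ℝ,
      (∑ i : Fin 3, fderiv ℝ G x (Pi.single i 1) i)
        = ∑ i : Fin 3, fderiv ℝ F (φ x) (EuclideanSpace.single i 1) i := by
    intro x
    rw [hfd x]
    rfl
  have hpi := pi_div_integral_zero G hG hGsupp
  rw [MeasureTheory.integral_congr_ae (Filter.Eventually.of_forall hdiv)] at hpi
  have hmp := (EuclideanSpace.volume_preserving_symm_measurableEquiv_toLp (Fin 3)).symm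
  have := hmp.integral_comp (MeasurableEquiv.measurableEmbedding _)
    (fun y : E3 => ∑ i : Fin 3, fderiv ℝ F y (EuclideanSpace.single i 1) i)
  rw [← this]
  rw [← hpi]
  rfl

lemma hasDerivAt_integral_param {α : Type*} [TopologicalSpace α] [MeasureSpace α]
    [BorelSpace α] [T2Space α] [IsFiniteMeasureOnCompacts (volume : Measure α)]
    (K : Set α) (hK : IsCompact K)
    (F F' : ℝ × α → ℝ) (hFc : Continuous F) (hF'c : Continuous F')
    (hFsupp : ∀ s a, a ∉ K → F (s, a) = 0)
    (hF'supp : ∀ s a, a ∉ K → F' (s, a) = 0)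
    (hderiv : ∀ s a, HasDerivAt (fun r => F (r, a)) (F' (s, a)) s)
    (t : ℝ) :
    HasDerivAt (fun s => ∫ a, F (s, a)) (∫ a, F' (t, a)) t := by
  obtain ⟨C, hC⟩ := (isCompact_Icc.prod hK).exists_bound_of_continuousOn
    (s := Set.Icc (t-1) (t+1) ×ˢ K) hF'c.continuousOn
  have hint : ∀ s : ℝ, Integrable (fun a => F (s, a)) := by
    intro s
    exact (hFc.comp (Continuous.prodMk_right s)).integrable_of_hasCompactSupport
      (HasCompactSupport.intro hK (fun a ha => hFsupp s a ha))
  refine (hasDerivAt_integral_of_dominated_loc_of_deriv_le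
    (F := fun s a => F (s, a)) (F' := fun s a => F' (s, a))
    (bound := K.indicator (fun _ => C)) (Metric.ball_mem_nhds t one_pos) ?_ (hint t) ?_ ?_ ?_ ?_).2
  · exact Filter.Eventually.of_forall fun s =>
      (hFc.comp (Continuous.prodMk_right s)).aestronglyMeasurable
  · exact (hF'c.comp (Continuous.prodMk_right t)).aestronglyMeasurable
  · refine Filter.Eventually.of_forall fun a => fun s hs => ?_
    by_cases ha : a ∈ K
    · rw [Set.indicator_of_mem ha]
      refine hC (s, a) ⟨?_, ha⟩
      have := Real.dist_eq s t ▸ Metric.mem_ball.mp hs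
      constructor <;> [linarith [abs_lt.mp this] ; linarith [(abs_lt.mp this).2]]
    · rw [Set.indicator_of_notMem ha]
      simp only [norm_le_zero_iff]
      exact hF'supp s a ha
  · rw [MeasureTheory.integrable_indicator_iff hK.measurableSet]
    exact integrableOn_const hK.measure_lt_top.ne
  · exact Filter.Eventually.of_forall fun a s _ => hderiv s a


lemma basis_expand (y : E3) : ∑ i : Fin 3, y i • EuclideanSpace.single i (1:ℝ) = y := by
  ext j
  have : (∑ i : Fin 3, y i • EuclideanSpace.single i (1:ℝ)) j
      = ∑ i : Fin 3, (y i • EuclideanSpace.single i (1:ℝ)) j := by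
    induction (Finset.univ : Finset (Fin 3)) using Finset.cons_induction with
    | empty => simp
    | cons a s ha ih => rw [Finset.sum_cons, Finset.sum_cons, PiLp.add_apply, ih]
  rw [this]
  simp [EuclideanSpace.single_apply]

lemma clm_expand (l : E3 →L[ℝ] ℝ) (y : E3) : l y = ∑ i : Fin 3, y i * l (EuclideanSpace.single i 1) := by
  conv_lhs => rw [← basis_expand y]
  rw [map_sum]
  simp [mul_comm]

lemma integrable_csupp {α : Type*} [TopologicalSpace α] [MeasureSpace α]
    [OpensMeasurableSpace α] [T2Space α] [IsFiniteMeasureOnCompacts (volume : Measure α)]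
    {g : α → ℝ} (hg : Continuous g) (K : Set α) (hK : IsCompact K)
    (h : ∀ a ∉ K, g a = 0) : Integrable g :=
  hg.integrable_of_hasCompactSupport (HasCompactSupport.intro hK h)

/-- Integration by parts for `div (h • A)`. -/
lemma ibp_smul (h : E3 → ℝ) (A : E3 → E3) (hh : ContDiff ℝ 1 h) (hA : ContDiff ℝ 1 A)
    (K : Set E3) (hK : IsCompact K) (hsupp : ∀ x ∉ K, h x = 0) :
    ∫ x : E3, (fderiv ℝ h x (A x)
      + h x * ∑ i : Fin 3, fderiv ℝ A x (EuclideanSpace.single i 1) i) = 0 := by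
  have key := div_integral_zero (fun x => h x • A x) (hh.smul hA)
    (HasCompactSupport.intro hK (fun x hx => by simp [hsupp x hx]))
  rw [← key]
  apply MeasureTheory.integral_congr_ae
  refine Filter.Eventually.of_forall (fun x => ?_)
  simp only []
  have hfd : HasFDerivAt (fun y => h y • A y)
      (h x • fderiv ℝ A x + (fderiv ℝ h x).smulRight (A x)) x :=
    (hh.differentiable one_ne_zero x).hasFDerivAt.smul (hA.differentiable one_ne_zero x).hasFDerivAt
  rw [show (fderiv ℝ (fun x => h x • A x) x) = _ from hfd.fderiv]
  simp only [ContinuousLinearMap.add_apply, ContinuousLinearMap.smul_apply,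
    ContinuousLinearMap.smulRight_apply]
  simp only [PiLp.add_apply, PiLp.smul_apply, smul_eq_mul]
  rw [Finset.sum_add_distrib, ← Finset.mul_sum]
  rw [clm_expand (fderiv ℝ h x) (A x)]
  have hc : ∑ i : Fin 3, A x i * (fderiv ℝ h x) (EuclideanSpace.single i 1)
      = ∑ i : Fin 3, (fderiv ℝ h x) (EuclideanSpace.single i 1) * A x i :=
    Finset.sum_congr rfl (fun i _ => mul_comm _ _)
  rw [hc]
  ring

lemma E3_sum_apply {ι : Type*} (s : Finset ι) (g : ι → E3) (j : Fin 3) :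
    (∑ i ∈ s, g i) j = ∑ i ∈ s, g i j := by
  induction s using Finset.cons_induction with
  | empty => rfl
  | cons a s ha ih => rw [Finset.sum_cons, Finset.sum_cons, PiLp.add_apply, ih]

lemma fderiv_zero_outside {F : Type*} [NormedAddCommGroup F] [NormedSpace ℝ F]
    {g : E3 → F} (K : Set E3) (hKc : IsClosed K) (hsupp : ∀ x ∉ K, g x = 0) :
    ∀ x ∉ K, fderiv ℝ g x = 0 := by
  intro x hx
  have hev : g =ᶠ[nhds x] (fun _ => 0) :=
    Filter.eventuallyEq_of_mem (hKc.isOpen_compl.mem_nhds hx) (fun y hy => hsupp y hy)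
  rw [hev.fderiv_eq]
  exact fderiv_const_apply 0

lemma ibp_const_dir (g : E3 → ℝ) (hg : ContDiff ℝ 1 g) (K : Set E3) (hK : IsCompact K)
    (hsupp : ∀ x ∉ K, g x = 0) (c : E3) : ∫ x : E3, fderiv ℝ g x c = 0 := by
  have key := ibp_smul g (fun _ => c) hg contDiff_const K hK hsupp
  rw [← key]
  congr 1
  funext x
  simp [fderiv_const]

lemma ibp_pressure (p : E3 → ℝ) (U : E3 → E3) (hp : ContDiff ℝ 1 p) (hU : ContDiff ℝ 1 U)
    (K : Set E3) (hK : IsCompact K) (hsupp : ∀ x ∉ K, p x = 0)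
    (hdiv : ∀ x, ∑ i : Fin 3, fderiv ℝ U x (EuclideanSpace.single i 1) i = 0) :
    ∫ x : E3, fderiv ℝ p x (U x) = 0 := by
  have key := ibp_smul p U hp hU K hK hsupp
  rw [← key]
  congr 1
  funext x
  rw [hdiv x]
  ring

lemma ibp_transport (U : E3 → E3) (hU : ContDiff ℝ 1 U) (K : Set E3) (hK : IsCompact K)
    (hsupp : ∀ x ∉ K, U x = 0)
    (hdiv : ∀ x, ∑ i : Fin 3, fderiv ℝ U x (EuclideanSpace.single i 1) i = 0) :
    ∫ x : E3, ⟪U x, fderiv ℝ U x (U x)⟫ = 0 := by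
  have hh : ContDiff ℝ 1 (fun x => ⟪U x, U x⟫) := hU.inner ℝ hU
  have key := ibp_smul (fun x => ⟪U x, U x⟫) U hh hU K hK
    (fun x hx => by simp [hsupp x hx])
  have hpt : ∀ x : E3, fderiv ℝ (fun y => ⟪U y, U y⟫) x (U x)
      = 2 * ⟪U x, fderiv ℝ U x (U x)⟫ := by
    intro x
    rw [fderiv_inner_apply (𝕜 := ℝ) (hU.differentiable one_ne_zero x) (hU.differentiable one_ne_zero x)]
    rw [real_inner_comm (fderiv ℝ U x (U x)) (U x)]
    ring
  rw [MeasureTheory.integral_congr_ae (Filter.Eventually.of_forall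
    (fun x => by rw [hpt x, hdiv x, mul_zero, add_zero]))] at key
  rw [MeasureTheory.integral_const_mul] at key
  linarith

lemma ibp_v (g : E3 → ℝ) (hg : ContDiff ℝ 1 g) (K : Set E3) (hK : IsCompact K)
    (hsupp : ∀ v ∉ K, g v = 0) (c : E3) :
    ∫ v : E3, ⟪v, v⟫ * fderiv ℝ g v (c - v)
      = ∫ v : E3, (3 * ⟪v, v⟫ * g v - 2 * ⟪v, c - v⟫ * g v) := by
  have hn : ContDiff ℝ 1 (fun v : E3 => ⟪v, v⟫) := contDiff_id.inner ℝ contDiff_id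
  have hh : ContDiff ℝ 1 (fun v : E3 => ⟪v, v⟫ * g v) := hn.mul hg
  have hA : ContDiff ℝ 1 (fun v : E3 => c - v) := contDiff_const.sub contDiff_id
  have key := ibp_smul (fun v => ⟪v, v⟫ * g v) (fun v => c - v) hh hA K hK
    (fun v hv => by simp [hsupp v hv])
  have hdivA : ∀ v : E3, ∑ i : Fin 3, fderiv ℝ (fun w : E3 => c - w) v (EuclideanSpace.single i 1) i = -3 := by
    intro v
    have hfd : HasFDerivAt (fun w : E3 => c - w) ((0 : E3 →L[ℝ] E3) - ContinuousLinearMap.id ℝ E3) v :=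
      (hasFDerivAt_const c v).sub (hasFDerivAt_id v)
    rw [show fderiv ℝ (fun w : E3 => c - w) v = _ from hfd.fderiv]
    simp [EuclideanSpace.single_apply]
  have hinner : ∀ v w : E3, fderiv ℝ (fun y : E3 => ⟪y, y⟫) v w = 2 * ⟪v, w⟫ := by
    intro v w
    rw [show (fun y : E3 => ⟪y, y⟫) = (fun y : E3 => ⟪(fun z : E3 => z) y, (fun z : E3 => z) y⟫) from rfl]
    rw [fderiv_inner_apply (𝕜 := ℝ) differentiableAt_fun_id differentiableAt_fun_id]
    simp only [fderiv_fun_id, ContinuousLinearMap.id_apply]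
    rw [real_inner_comm w v]
    ring
  have hpt : ∀ v : E3, fderiv ℝ (fun y : E3 => ⟪y, y⟫ * g y) v (c - v)
      = 2 * ⟪v, c - v⟫ * g v + ⟪v, v⟫ * fderiv ℝ g v (c - v) := by
    intro v
    have hd1 : DifferentiableAt ℝ (fun y : E3 => ⟪y, y⟫) v := hn.differentiable one_ne_zero v
    have hd2 : DifferentiableAt ℝ g v := hg.differentiable one_ne_zero v
    rw [fderiv_fun_mul hd1 hd2]
    simp only [ContinuousLinearMap.add_apply, ContinuousLinearMap.smul_apply, smul_eq_mul]
    rw [hinner v (c - v)]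
    ring
  -- key : ∫ (fderiv h v (c-v) + h v * (-3)) = 0
  have hXc : Continuous (fun v : E3 => ⟪v, v⟫ * fderiv ℝ g v (c - v)) := by
    have h1 : Continuous (fun v : E3 => fderiv ℝ g v) := hg.continuous_fderiv one_ne_zero
    exact ((continuous_id.inner continuous_id)).mul
      (h1.clm_apply (continuous_const.sub continuous_id))
  have hX : Integrable (fun v : E3 => ⟪v, v⟫ * fderiv ℝ g v (c - v)) :=
    integrable_csupp hXc K hK (fun v hv => by
      rw [fderiv_zero_outside K hK.isClosed hsupp v hv]; simp)
  have hYc : Continuous (fun v : E3 => 2 * ⟪v, c - v⟫ * g v - 3 * ⟪v, v⟫ * g v) := by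
    exact ((continuous_const.mul (continuous_id.inner (continuous_const.sub continuous_id))).mul
      hg.continuous).sub ((continuous_const.mul (continuous_id.inner continuous_id)).mul hg.continuous)
  have hY : Integrable (fun v : E3 => 2 * ⟪v, c - v⟫ * g v - 3 * ⟪v, v⟫ * g v) :=
    integrable_csupp hYc K hK (fun v hv => by simp [hsupp v hv])
  have keq : (fun v : E3 => fderiv ℝ (fun y : E3 => ⟪y, y⟫ * g y) v (c - v)
        + (⟪v, v⟫ * g v) * ∑ i : Fin 3, fderiv ℝ (fun w : E3 => c - w) v (EuclideanSpace.single i 1) i)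
      = fun v : E3 => (⟪v, v⟫ * fderiv ℝ g v (c - v))
        + (2 * ⟪v, c - v⟫ * g v - 3 * ⟪v, v⟫ * g v) := by
    funext v
    rw [hpt v, hdivA v]
    ring
  rw [keq, MeasureTheory.integral_add hX hY] at key
  have : ∫ v : E3, (3 * ⟪v, v⟫ * g v - 2 * ⟪v, c - v⟫ * g v)
      = - ∫ v : E3, (2 * ⟪v, c - v⟫ * g v - 3 * ⟪v, v⟫ * g v) := by
    rw [← MeasureTheory.integral_neg]
    congr 1
    funext v
    ring
  rw [this]
  linarith

lemma ibp_diffusion (U : E3 → E3) (hU : ContDiff ℝ 2 U) (K : Set E3) (hK : IsCompact K)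
    (hsupp : ∀ x ∉ K, U x = 0) :
    ∫ x : E3, (⟪U x, ∑ i : Fin 3,
        fderiv ℝ (fun y => fderiv ℝ U y (EuclideanSpace.single i 1)) x (EuclideanSpace.single i 1)⟫
      + ∑ i : Fin 3, ‖fderiv ℝ U x (EuclideanSpace.single i 1)‖^2) = 0 := by
  have hU1 : ContDiff ℝ 1 U := hU.of_le (by norm_num)
  have hV : ∀ i : Fin 3, ContDiff ℝ 1 (fun y => fderiv ℝ U y (EuclideanSpace.single i 1)) :=
    fun i => (hU.fderiv_right (by norm_num)).clm_apply contDiff_const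
  have hg : ∀ i : Fin 3, ContDiff ℝ 1
      (fun x => ⟪U x, fderiv ℝ U x (EuclideanSpace.single i 1)⟫) :=
    fun i => hU1.inner ℝ (hV i)
  set F : E3 → E3 := fun x => ∑ i : Fin 3,
    (⟪U x, fderiv ℝ U x (EuclideanSpace.single i 1)⟫ : ℝ) • EuclideanSpace.single i 1 with hFdef
  have hF : ContDiff ℝ 1 F := ContDiff.sum (fun i _ => (hg i).smul contDiff_const)
  have hFsupp : ∀ x ∉ K, F x = 0 := by
    intro x hx
    simp [hFdef, hsupp x hx]
  have key := div_integral_zero F hF (HasCompactSupport.intro hK hFsupp)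
  rw [← key]
  apply MeasureTheory.integral_congr_ae
  refine Filter.Eventually.of_forall (fun x => ?_)
  have hFd : HasFDerivAt F (∑ i : Fin 3,
      (fderiv ℝ (fun y => ⟪U y, fderiv ℝ U y (EuclideanSpace.single i 1)⟫) x).smulRight
        (EuclideanSpace.single i 1)) x := by
    apply HasFDerivAt.fun_sum
    intro i _
    exact ((hg i).differentiable one_ne_zero x).hasFDerivAt.smul_const _
  have hfd : ∀ j : Fin 3, (fderiv ℝ F x) (EuclideanSpace.single j 1) j
      = fderiv ℝ (fun y => ⟪U y, fderiv ℝ U y (EuclideanSpace.single j 1)⟫) x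
          (EuclideanSpace.single j 1) := by
    intro j
    rw [show fderiv ℝ F x = _ from hFd.fderiv]
    rw [ContinuousLinearMap.sum_apply, E3_sum_apply]
    simp only [ContinuousLinearMap.smulRight_apply, PiLp.smul_apply, smul_eq_mul,
      EuclideanSpace.single_apply]
    rw [Finset.sum_eq_single j]
    · simp
    · intro b _ hb
      simp [hb, Ne.symm hb]
    · simp
  have hptj : ∀ j : Fin 3,
      fderiv ℝ (fun y => ⟪U y, fderiv ℝ U y (EuclideanSpace.single j 1)⟫) x
          (EuclideanSpace.single j 1)
        = ⟪U x, fderiv ℝ (fun y => fderiv ℝ U y (EuclideanSpace.single j 1)) x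
            (EuclideanSpace.single j 1)⟫
          + ‖fderiv ℝ U x (EuclideanSpace.single j 1)‖^2 := by
    intro j
    rw [fderiv_inner_apply (𝕜 := ℝ) (hU1.differentiable one_ne_zero x)
      ((hV j).differentiable one_ne_zero x)]
    congr 1
    rw [real_inner_comm, real_inner_self_eq_norm_sq]
  simp only []
  rw [Finset.sum_congr rfl (fun j _ => hfd j), Finset.sum_congr rfl (fun j _ => hptj j),
    Finset.sum_add_distrib, ← inner_sum]

lemma inner_gradient_eq (g : E3 → ℝ) (x y : E3) : ⟪y, gradient g x⟫ = fderiv ℝ g x y := by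
  rw [real_inner_comm]
  exact InnerProductSpace.toDual_symm_apply

lemma integrable_csupp' {α : Type*} [TopologicalSpace α] [MeasureSpace α]
    [OpensMeasurableSpace α] [T2Space α] [IsFiniteMeasureOnCompacts (volume : Measure α)]
    {F : Type*} [NormedAddCommGroup F]
    {g : α → F} (hg : Continuous g) (K : Set α) (hK : IsCompact K)
    (h : ∀ a ∉ K, g a = 0) : Integrable g :=
  hg.integrable_of_hasCompactSupport (HasCompactSupport.intro hK h)


/-- Energy balance `dE₀/dt + D₀ = 0` for the Vlasov–Navier–Stokes system: for smooth,
suitably compactly supported solutions, the total energy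
`E₀(t) = ½∫‖u‖² + ½∫∫‖v‖²f` is differentiable on `(0,T)` with derivative
`-D₀(t) = -(∫‖∇ₓu‖² + ∫∫‖u - v‖²f)` (Frobenius norm of `∇ₓu`). -/
theorem stmt16 (T : ℝ) (hT : 0 < T)
    (f : ℝ × E3 × E3 → ℝ) (u : ℝ × E3 → E3) (P : ℝ × E3 → ℝ)
    (hf : ContDiff ℝ 1 f) (hu : ContDiff ℝ 2 u) (hP : ContDiff ℝ 2 P)
    (hfnn : ∀ t ∈ Set.Icc (0 : ℝ) T, ∀ (x v : E3), 0 ≤ f (t, x, v))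
    (Kf : Set (E3 × E3)) (hKf : IsCompact Kf)
    (hfsupp : ∀ (t : ℝ) (x v : E3), (x, v) ∉ Kf → f (t, x, v) = 0)
    (Ku : Set E3) (hKu : IsCompact Ku)
    (husupp : ∀ (t : ℝ) (x : E3), x ∉ Ku → u (t, x) = 0 ∧ P (t, x) = 0)
    (hVlasov : ∀ t ∈ Set.Icc (0 : ℝ) T, ∀ (x v : E3),
      deriv (fun s => f (s, x, v)) t
        + ⟪v, gradient (fun y => f (t, y, v)) x⟫
        + (⟪u (t, x) - v, gradient (fun w => f (t, x, w)) v⟫ - 3 * f (t, x, v)) = 0)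
    (hNS : ∀ t ∈ Set.Icc (0 : ℝ) T, ∀ x : E3,
      deriv (fun s => u (s, x)) t
        + fderiv ℝ (fun y => u (t, y)) x (u (t, x))
        - (∑ i : Fin 3, fderiv ℝ
            (fun y => fderiv ℝ (fun y' => u (t, y')) y (EuclideanSpace.single i 1))
            x (EuclideanSpace.single i 1))
        + gradient (fun y => P (t, y)) x
      = ∫ v : E3, f (t, x, v) • (v - u (t, x)))
    (hdivfree : ∀ t ∈ Set.Icc (0 : ℝ) T, ∀ x : E3,
      (∑ i : Fin 3, fderiv ℝ (fun y => u (t, y)) x (EuclideanSpace.single i 1) i) = 0) :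
    ∀ t ∈ Set.Ioo (0 : ℝ) T,
      HasDerivAt
        (fun s => (1 / 2) * (∫ x : E3, ‖u (s, x)‖ ^ 2)
          + (1 / 2) * (∫ x : E3, ∫ v : E3, ‖v‖ ^ 2 * f (s, x, v)))
        (-((∫ x : E3, ∑ j : Fin 3,
              ‖fderiv ℝ (fun y => u (t, y)) x (EuclideanSpace.single j 1)‖ ^ 2)
          + ∫ x : E3, ∫ v : E3, ‖u (t, x) - v‖ ^ 2 * f (t, x, v))) t := by
  intro t ht
  have htI : t ∈ Set.Icc (0 : ℝ) T := ⟨ht.1.le, ht.2.le⟩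
  -- basic regularity
  have hu1 : ContDiff ℝ 1 u := hu.of_le one_le_two
  have hUc2 : ContDiff ℝ 2 (fun y => u (t, y)) :=
    hu.comp (contDiff_const.prodMk contDiff_id)
  have hUc1 : ContDiff ℝ 1 (fun y => u (t, y)) := hUc2.of_le one_le_two
  have hPt : ContDiff ℝ 1 (fun y => P (t, y)) :=
    (hP.of_le one_le_two).comp (contDiff_const.prodMk contDiff_id)
  have hgv : ∀ v : E3, ContDiff ℝ 1 (fun y => f (t, y, v)) :=
    fun v => hf.comp (contDiff_const.prodMk (contDiff_id.prodMk contDiff_const))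
  have hgx : ∀ x : E3, ContDiff ℝ 1 (fun w => f (t, x, w)) :=
    fun x => hf.comp (contDiff_const.prodMk (contDiff_const.prodMk contDiff_id))
  -- time derivatives
  have hudt : ∀ (s : ℝ) (x : E3),
      HasDerivAt (fun r => u (r, x)) (fderiv ℝ u (s, x) (1, 0)) s := by
    intro s x
    have hline : HasDerivAt (fun r : ℝ => (r, x)) ((1 : ℝ), (0 : E3)) s :=
      (hasDerivAt_id s).prodMk (hasDerivAt_const s x)
    exact (hu.differentiable two_ne_zero (s, x)).hasFDerivAt.comp_hasDerivAt s hline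
  have hfdt : ∀ (s : ℝ) (x v : E3),
      HasDerivAt (fun r => f (r, x, v)) (fderiv ℝ f (s, x, v) (1, 0, 0)) s := by
    intro s x v
    have hline : HasDerivAt (fun r : ℝ => (r, x, v)) ((1 : ℝ), (0 : E3), (0 : E3)) s :=
      (hasDerivAt_id s).prodMk (hasDerivAt_const s (x, v))
    exact (hf.differentiable one_ne_zero (s, x, v)).hasFDerivAt.comp_hasDerivAt s hline
  -- vanishing of derivatives outside supports
  have hfder0 : ∀ (s : ℝ) (x v : E3), (x, v) ∉ Kf → fderiv ℝ f (s, x, v) = 0 := by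
    intro s x v hxv
    have hopen : IsOpen {q : ℝ × E3 × E3 | q.2 ∉ Kf} :=
      (hKf.isClosed.preimage continuous_snd).isOpen_compl
    have hev : f =ᶠ[nhds (s, x, v)] (fun _ => 0) :=
      Filter.eventuallyEq_of_mem (hopen.mem_nhds hxv)
        (fun q hq => hfsupp q.1 q.2.1 q.2.2 hq)
    rw [hev.fderiv_eq]
    exact fderiv_const_apply 0
  -- fluid energy derivative
  have hder1 : HasDerivAt (fun s => ∫ x : E3, ‖u (s, x)‖ ^ 2)
      (∫ x : E3, 2 * ⟪u (t, x), fderiv ℝ u (t, x) (1, 0)⟫) t := by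
    refine hasDerivAt_integral_param Ku hKu
      (fun q => ‖u q‖ ^ 2) (fun q => 2 * ⟪u q, fderiv ℝ u q (1, 0)⟫)
      (hu.continuous.norm.pow 2) ?_ ?_ ?_ ?_ t
    · exact continuous_const.mul (hu.continuous.inner
        ((hu.continuous_fderiv two_ne_zero).clm_apply continuous_const))
    · intro s x hx; simp [(husupp s x hx).1]
    · intro s x hx; simp [(husupp s x hx).1]
    · intro s x
      have h := (hudt s x).inner ℝ (hudt s x)
      have hfun : (fun r => ⟪u (r, x), u (r, x)⟫) = (fun r => ‖u (r, x)‖ ^ 2) :=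
        funext (fun r => real_inner_self_eq_norm_sq _)
      rw [hfun] at h
      have hval : ⟪u (s, x), fderiv ℝ u (s, x) (1, 0)⟫
            + ⟪fderiv ℝ u (s, x) (1, 0), u (s, x)⟫
          = 2 * ⟪u (s, x), fderiv ℝ u (s, x) (1, 0)⟫ := by
        rw [real_inner_comm (fderiv ℝ u (s, x) (1, 0)) (u (s, x))]; ring
      rw [hval] at h
      exact h
  -- kinetic energy derivative (on the product space)
  have hder2 : HasDerivAt (fun s => ∫ p : E3 × E3, ‖p.2‖ ^ 2 * f (s, p.1, p.2))
      (∫ p : E3 × E3, ‖p.2‖ ^ 2 * fderiv ℝ f (t, p.1, p.2) (1, 0, 0)) t := by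
    refine hasDerivAt_integral_param Kf hKf
      (fun q => ‖q.2.2‖ ^ 2 * f (q.1, q.2.1, q.2.2))
      (fun q => ‖q.2.2‖ ^ 2 * fderiv ℝ f (q.1, q.2.1, q.2.2) (1, 0, 0)) ?_ ?_ ?_ ?_ ?_ t
    · exact ((continuous_snd.snd).norm.pow 2).mul hf.continuous
    · refine ((continuous_snd.snd).norm.pow 2).mul ?_
      exact (hf.continuous_fderiv one_ne_zero).clm_apply continuous_const
    · intro s p hp
      show ‖p.2‖ ^ 2 * f (s, p.1, p.2) = 0
      rw [hfsupp s p.1 p.2 hp]; ring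
    · intro s p hp
      show ‖p.2‖ ^ 2 * fderiv ℝ f (s, p.1, p.2) (1, 0, 0) = 0
      rw [hfder0 s p.1 p.2 hp]; simp
    · intro s p
      show HasDerivAt (fun r => ‖p.2‖ ^ 2 * f (r, p.1, p.2))
        (‖p.2‖ ^ 2 * fderiv ℝ f (s, p.1, p.2) (1, 0, 0)) s
      exact (hfdt s p.1 p.2).const_mul _
  
  -- measure bookkeeping
  have hvol : (volume : Measure (E3 × E3)) = (volume : Measure E3).prod volume :=
    MeasureTheory.Measure.volume_eq_prod E3 E3
  have mkint : ∀ (g : E3 × E3 → ℝ), Continuous g → (∀ p, p ∉ Kf → g p = 0) →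
      Integrable g ((volume : Measure E3).prod volume) := by
    intro g hgc hgs
    rw [← hvol]
    exact integrable_csupp' hgc Kf hKf hgs
  have hKv2 : IsCompact (Prod.snd '' Kf) := hKf.image continuous_snd
  have hKx2 : IsCompact (Prod.fst '' Kf) := hKf.image continuous_fst
  -- continuity building blocks on the product space
  have cU : Continuous (fun p : E3 × E3 => u (t, p.1)) :=
    hu.continuous.comp (continuous_const.prodMk continuous_fst)
  have cf0 : Continuous (fun p : E3 × E3 => f (t, p.1, p.2)) :=
    hf.continuous.comp (continuous_const.prodMk continuous_id)
  have cdf : Continuous (fun p : E3 × E3 => fderiv ℝ f (t, p.1, p.2)) :=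
    (hf.continuous_fderiv one_ne_zero).comp (continuous_const.prodMk continuous_id)
  -- pointwise rearranged Navier-Stokes
  have hNSpt : ∀ x : E3, fderiv ℝ u (t, x) (1, 0)
      = (∫ v : E3, f (t, x, v) • (v - u (t, x)))
        - fderiv ℝ (fun y => u (t, y)) x (u (t, x))
        + (∑ i : Fin 3, fderiv ℝ
            (fun y => fderiv ℝ (fun y' => u (t, y')) y (EuclideanSpace.single i 1))
            x (EuclideanSpace.single i 1))
        - gradient (fun y => P (t, y)) x := by
    intro x
    have h := hNS t htI x
    rw [show deriv (fun s => u (s, x)) t = fderiv ℝ u (t, x) (1, 0)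
      from (hudt t x).deriv] at h
    rw [← h]; abel
  -- inner product with the source term
  have hSx : ∀ x : E3, Integrable (fun v : E3 => f (t, x, v) • (v - u (t, x))) := by
    intro x
    refine integrable_csupp' ?_ (Prod.snd '' Kf) hKv2 ?_
    · exact ((hf.continuous.comp (continuous_const.prodMk
        (continuous_const.prodMk continuous_id)))).smul (continuous_id.sub continuous_const)
    · intro v hv
      rw [hfsupp t x v (fun hmem => hv ⟨(x, v), hmem, rfl⟩)]
      simp
  have hinnerS : ∀ x : E3, ⟪u (t, x), ∫ v : E3, f (t, x, v) • (v - u (t, x))⟫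
      = ∫ v : E3, f (t, x, v) * ⟪u (t, x), v - u (t, x)⟫ := by
    intro x
    rw [← integral_inner (hSx x) (u (t, x))]
    congr 1
    funext v
    rw [real_inner_smul_right]
  -- fluid IBP identities
  have hBzero : ∫ x : E3, ⟪u (t, x), fderiv ℝ (fun y => u (t, y)) x (u (t, x))⟫ = 0 :=
    ibp_transport (fun y => u (t, y)) hUc1 Ku hKu (fun x hx => (husupp t x hx).1)
      (hdivfree t htI)
  have hGzero : ∫ x : E3, ⟪u (t, x), gradient (fun y => P (t, y)) x⟫ = 0 := by
    have h := ibp_pressure (fun y => P (t, y)) (fun y => u (t, y)) hPt hUc1 Ku hKu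
      (fun x hx => (husupp t x hx).2) (hdivfree t htI)
    rw [← h]
    congr 1
    funext x
    exact inner_gradient_eq _ _ _
  have hDU0 : ∀ x ∉ Ku, fderiv ℝ (fun y => u (t, y)) x = 0 :=
    fderiv_zero_outside Ku hKu.isClosed (fun x hx => (husupp t x hx).1)
  have cDU : Continuous (fun x : E3 => fderiv ℝ (fun y => u (t, y)) x) :=
    hUc2.continuous_fderiv two_ne_zero
  have hQint : Integrable (fun x : E3 => ∑ i : Fin 3,
      ‖fderiv ℝ (fun y => u (t, y)) x (EuclideanSpace.single i 1)‖ ^ 2) := by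
    refine integrable_csupp' ?_ Ku hKu ?_
    · exact continuous_finset_sum _ (fun i _ =>
        ((cDU.clm_apply continuous_const).norm.pow 2))
    · intro x hx
      simp [hDU0 x hx]
  have hUDint : Integrable (fun x : E3 => (⟪u (t, x), ∑ i : Fin 3,
      fderiv ℝ (fun y => fderiv ℝ (fun y' => u (t, y')) y (EuclideanSpace.single i 1))
        x (EuclideanSpace.single i 1)⟫ : ℝ)) := by
    refine integrable_csupp' ?_ Ku hKu ?_
    · refine Continuous.inner hUc1.continuous ?_
      refine continuous_finset_sum _ (fun i _ => ?_)
      have hVi : ContDiff ℝ 1 (fun y => fderiv ℝ (fun y' => u (t, y')) y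
          (EuclideanSpace.single i 1)) :=
        (hUc2.fderiv_right (by norm_num)).clm_apply contDiff_const
      exact (hVi.continuous_fderiv one_ne_zero).clm_apply continuous_const
    · intro x hx
      rw [(husupp t x hx).1]
      simp
  
  have hDelta := ibp_diffusion (fun y => u (t, y)) hUc2 Ku hKu
    (fun x hx => (husupp t x hx).1)
  have hDeltaEq : (∫ x : E3, (⟪u (t, x), ∑ i : Fin 3,
        fderiv ℝ (fun y => fderiv ℝ (fun y' => u (t, y')) y (EuclideanSpace.single i 1))
          x (EuclideanSpace.single i 1)⟫ : ℝ))
      = - ∫ x : E3, ∑ i : Fin 3,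
          ‖fderiv ℝ (fun y => u (t, y)) x (EuclideanSpace.single i 1)‖ ^ 2 := by
    rw [MeasureTheory.integral_add hUDint hQint] at hDelta
    linarith
  -- partial derivatives of f in terms of the full derivative
  have hgrad_x : ∀ x v : E3, fderiv ℝ (fun y => f (t, y, v)) x
      = (fderiv ℝ f (t, x, v)).comp
        ((0 : E3 →L[ℝ] ℝ).prod ((ContinuousLinearMap.id ℝ E3).prod (0 : E3 →L[ℝ] E3))) := by
    intro x v
    have hline : HasFDerivAt (fun y : E3 => ((t, y, v) : ℝ × E3 × E3))
        ((0 : E3 →L[ℝ] ℝ).prod ((ContinuousLinearMap.id ℝ E3).prod (0 : E3 →L[ℝ] E3))) x :=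
      (hasFDerivAt_const t x).prodMk ((hasFDerivAt_id x).prodMk (hasFDerivAt_const v x))
    exact ((hf.differentiable one_ne_zero (t, x, v)).hasFDerivAt.comp x hline).fderiv
  have hgrad_v : ∀ x v : E3, fderiv ℝ (fun w => f (t, x, w)) v
      = (fderiv ℝ f (t, x, v)).comp
        ((0 : E3 →L[ℝ] ℝ).prod ((0 : E3 →L[ℝ] E3).prod (ContinuousLinearMap.id ℝ E3))) := by
    intro x v
    have hline : HasFDerivAt (fun w : E3 => ((t, x, w) : ℝ × E3 × E3))
        ((0 : E3 →L[ℝ] ℝ).prod ((0 : E3 →L[ℝ] E3).prod (ContinuousLinearMap.id ℝ E3))) v :=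
      (hasFDerivAt_const t v).prodMk ((hasFDerivAt_const x v).prodMk (hasFDerivAt_id v))
    exact ((hf.differentiable one_ne_zero (t, x, v)).hasFDerivAt.comp v hline).fderiv
  have hVpt : ∀ x v : E3, fderiv ℝ f (t, x, v) (1, 0, 0)
      = -(fderiv ℝ f (t, x, v) ((0 : ℝ), v, (0 : E3)))
        - fderiv ℝ f (t, x, v) ((0 : ℝ), (0 : E3), u (t, x) - v) + 3 * f (t, x, v) := by
    intro x v
    have h := hVlasov t htI x v
    rw [show deriv (fun s => f (s, x, v)) t = fderiv ℝ f (t, x, v) (1, 0, 0)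
      from (hfdt t x v).deriv] at h
    rw [inner_gradient_eq, inner_gradient_eq, hgrad_x, hgrad_v] at h
    simp only [ContinuousLinearMap.coe_comp', Function.comp_apply,
      ContinuousLinearMap.prod_apply, ContinuousLinearMap.zero_apply,
      ContinuousLinearMap.id_apply] at h
    linarith
  
  -- product-space integrands
  have hT1int : Integrable (fun p : E3 × E3 =>
      ‖p.2‖ ^ 2 * fderiv ℝ f (t, p.1, p.2) ((0 : ℝ), p.2, (0 : E3)))
      ((volume : Measure E3).prod volume) := by
    refine mkint _ ?_ ?_
    · exact (continuous_snd.norm.pow 2).mul (cdf.clm_apply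
        (continuous_const.prodMk (continuous_snd.prodMk continuous_const)))
    · intro p hp
      rw [hfder0 t p.1 p.2 hp]
      simp
  have hT2int : Integrable (fun p : E3 × E3 =>
      ‖p.2‖ ^ 2 * fderiv ℝ f (t, p.1, p.2) ((0 : ℝ), (0 : E3), u (t, p.1) - p.2))
      ((volume : Measure E3).prod volume) := by
    refine mkint _ ?_ ?_
    · exact (continuous_snd.norm.pow 2).mul (cdf.clm_apply
        (continuous_const.prodMk (continuous_const.prodMk (cU.sub continuous_snd))))
    · intro p hp
      rw [hfder0 t p.1 p.2 hp]
      simp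
  have hT3int : Integrable (fun p : E3 × E3 => ‖p.2‖ ^ 2 * f (t, p.1, p.2))
      ((volume : Measure E3).prod volume) := by
    refine mkint _ ((continuous_snd.norm.pow 2).mul cf0) ?_
    intro p hp
    rw [hfsupp t p.1 p.2 hp]
    ring
  have hT4int : Integrable (fun p : E3 × E3 => ⟪p.2, u (t, p.1) - p.2⟫ * f (t, p.1, p.2))
      ((volume : Measure E3).prod volume) := by
    refine mkint _ ((continuous_snd.inner (cU.sub continuous_snd)).mul cf0) ?_
    intro p hp
    rw [hfsupp t p.1 p.2 hp]
    ring
  have hT5int : Integrable (fun p : E3 × E3 => ‖u (t, p.1) - p.2‖ ^ 2 * f (t, p.1, p.2))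
      ((volume : Measure E3).prod volume) := by
    refine mkint _ (((cU.sub continuous_snd).norm.pow 2).mul cf0) ?_
    intro p hp
    rw [hfsupp t p.1 p.2 hp]
    ring
  have hHint : Integrable (fun p : E3 × E3 =>
      f (t, p.1, p.2) * ⟪u (t, p.1), p.2 - u (t, p.1)⟫)
      ((volume : Measure E3).prod volume) := by
    refine mkint _ (cf0.mul (cU.inner (continuous_snd.sub cU))) ?_
    intro p hp
    rw [hfsupp t p.1 p.2 hp]
    ring
  -- slice integrability in v
  have hT3x : ∀ x : E3, Integrable (fun v : E3 => ‖v‖ ^ 2 * f (t, x, v)) := by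
    intro x
    refine integrable_csupp' ?_ (Prod.snd '' Kf) hKv2 ?_
    · exact (continuous_norm.pow 2).mul (hf.continuous.comp (continuous_const.prodMk
        (continuous_const.prodMk continuous_id)))
    · intro v hv
      rw [hfsupp t x v (fun hmem => hv ⟨(x, v), hmem, rfl⟩)]
      ring
  have hT4x : ∀ x : E3, Integrable (fun v : E3 => ⟪v, u (t, x) - v⟫ * f (t, x, v)) := by
    intro x
    refine integrable_csupp' ?_ (Prod.snd '' Kf) hKv2 ?_
    · exact (continuous_id.inner (continuous_const.sub continuous_id)).mul
        (hf.continuous.comp (continuous_const.prodMk (continuous_const.prodMk continuous_id)))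
    · intro v hv
      rw [hfsupp t x v (fun hmem => hv ⟨(x, v), hmem, rfl⟩)]
      ring
  -- first transport term vanishes
  have hT1zero : (∫ p : E3 × E3, ‖p.2‖ ^ 2 * fderiv ℝ f (t, p.1, p.2) ((0 : ℝ), p.2, (0 : E3))
      ∂((volume : Measure E3).prod volume)) = 0 := by
    rw [MeasureTheory.integral_prod_symm _ hT1int]
    have hinner0 : ∀ v : E3,
        (∫ x : E3, ‖v‖ ^ 2 * fderiv ℝ f (t, x, v) ((0 : ℝ), v, (0 : E3))) = 0 := by
      intro v
      rw [MeasureTheory.integral_const_mul]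
      have h0 := ibp_const_dir (fun y => f (t, y, v)) (hgv v) (Prod.fst '' Kf) hKx2
        (fun x hx => hfsupp t x v (fun hmem => hx ⟨(x, v), hmem, rfl⟩)) v
      have heq : (fun x : E3 => fderiv ℝ (fun y => f (t, y, v)) x v)
          = fun x : E3 => fderiv ℝ f (t, x, v) ((0 : ℝ), v, (0 : E3)) := by
        funext x
        rw [hgrad_x x v]
        simp
      rw [heq] at h0
      rw [h0, mul_zero]
    calc (∫ v : E3, ∫ x : E3, ‖v‖ ^ 2 * fderiv ℝ f (t, x, v) ((0 : ℝ), v, (0 : E3)))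
        = ∫ v : E3, (0 : ℝ) := by
          congr 1
          funext v
          exact hinner0 v
      _ = 0 := MeasureTheory.integral_zero _ _
  
  -- second transport term via IBP in v
  have haT3 : Integrable (fun x : E3 => ∫ v : E3, ‖v‖ ^ 2 * f (t, x, v)) :=
    hT3int.integral_prod_left
  have haT4 : Integrable (fun x : E3 => ∫ v : E3, ⟪v, u (t, x) - v⟫ * f (t, x, v)) :=
    hT4int.integral_prod_left
  have hT2eq : (∫ p : E3 × E3, ‖p.2‖ ^ 2 * fderiv ℝ f (t, p.1, p.2)
        ((0 : ℝ), (0 : E3), u (t, p.1) - p.2) ∂((volume : Measure E3).prod volume))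
      = 3 * (∫ p : E3 × E3, ‖p.2‖ ^ 2 * f (t, p.1, p.2) ∂((volume : Measure E3).prod volume))
        - 2 * (∫ p : E3 × E3, ⟪p.2, u (t, p.1) - p.2⟫ * f (t, p.1, p.2)
            ∂((volume : Measure E3).prod volume)) := by
    rw [MeasureTheory.integral_prod _ hT2int, MeasureTheory.integral_prod _ hT3int,
      MeasureTheory.integral_prod _ hT4int]
    have hx2 : ∀ x : E3,
        (∫ v : E3, ‖v‖ ^ 2 * fderiv ℝ f (t, x, v) ((0 : ℝ), (0 : E3), u (t, x) - v))
        = 3 * (∫ v : E3, ‖v‖ ^ 2 * f (t, x, v))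
          - 2 * (∫ v : E3, ⟪v, u (t, x) - v⟫ * f (t, x, v)) := by
      intro x
      have h := ibp_v (fun w => f (t, x, w)) (hgx x) (Prod.snd '' Kf) hKv2
        (fun v hv => hfsupp t x v (fun hmem => hv ⟨(x, v), hmem, rfl⟩)) (u (t, x))
      have hL : (fun v : E3 => (⟪v, v⟫ : ℝ) * fderiv ℝ (fun w => f (t, x, w)) v (u (t, x) - v))
          = fun v : E3 => ‖v‖ ^ 2 * fderiv ℝ f (t, x, v) ((0 : ℝ), (0 : E3), u (t, x) - v) := by
        funext v
        rw [real_inner_self_eq_norm_sq, hgrad_v x v]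
        simp
      have hR : (fun v : E3 => 3 * (⟪v, v⟫ : ℝ) * f (t, x, v) - 2 * ⟪v, u (t, x) - v⟫ * f (t, x, v))
          = fun v : E3 => 3 * (‖v‖ ^ 2 * f (t, x, v)) - 2 * (⟪v, u (t, x) - v⟫ * f (t, x, v)) := by
        funext v
        rw [real_inner_self_eq_norm_sq]
        ring
      rw [hL, hR] at h
      rw [h, MeasureTheory.integral_sub ((hT3x x).const_mul 3) ((hT4x x).const_mul 2),
        MeasureTheory.integral_const_mul, MeasureTheory.integral_const_mul]
    calc (∫ x : E3, ∫ v : E3, ‖v‖ ^ 2 * fderiv ℝ f (t, x, v) ((0 : ℝ), (0 : E3), u (t, x) - v))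
        = ∫ x : E3, (3 * (∫ v : E3, ‖v‖ ^ 2 * f (t, x, v))
            - 2 * (∫ v : E3, ⟪v, u (t, x) - v⟫ * f (t, x, v))) := by
          congr 1
          funext x
          exact hx2 x
      _ = 3 * (∫ x : E3, ∫ v : E3, ‖v‖ ^ 2 * f (t, x, v))
            - 2 * (∫ x : E3, ∫ v : E3, ⟪v, u (t, x) - v⟫ * f (t, x, v)) := by
          rw [MeasureTheory.integral_sub (haT3.const_mul 3) (haT4.const_mul 2),
            MeasureTheory.integral_const_mul, MeasureTheory.integral_const_mul]
  -- kinetic energy derivative value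
  have hKin : (∫ p : E3 × E3, ‖p.2‖ ^ 2 * fderiv ℝ f (t, p.1, p.2) (1, 0, 0)
        ∂((volume : Measure E3).prod volume))
      = 2 * ∫ p : E3 × E3, ⟪p.2, u (t, p.1) - p.2⟫ * f (t, p.1, p.2)
          ∂((volume : Measure E3).prod volume) := by
    have hpt : (fun p : E3 × E3 => ‖p.2‖ ^ 2 * fderiv ℝ f (t, p.1, p.2) (1, 0, 0))
        = fun p : E3 × E3 =>
          (-(‖p.2‖ ^ 2 * fderiv ℝ f (t, p.1, p.2) ((0 : ℝ), p.2, (0 : E3)))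
            - ‖p.2‖ ^ 2 * fderiv ℝ f (t, p.1, p.2) ((0 : ℝ), (0 : E3), u (t, p.1) - p.2))
          + 3 * (‖p.2‖ ^ 2 * f (t, p.1, p.2)) := by
      funext p
      rw [hVpt p.1 p.2]
      ring
    have h1 : Integrable (fun p : E3 × E3 =>
        -(‖p.2‖ ^ 2 * fderiv ℝ f (t, p.1, p.2) ((0 : ℝ), p.2, (0 : E3)))
          - ‖p.2‖ ^ 2 * fderiv ℝ f (t, p.1, p.2) ((0 : ℝ), (0 : E3), u (t, p.1) - p.2))
        ((volume : Measure E3).prod volume) := hT1int.neg.sub hT2int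
    have h2 : Integrable (fun p : E3 × E3 =>
        -(‖p.2‖ ^ 2 * fderiv ℝ f (t, p.1, p.2) ((0 : ℝ), p.2, (0 : E3))))
        ((volume : Measure E3).prod volume) := hT1int.neg
    rw [hpt, MeasureTheory.integral_add h1 (hT3int.const_mul 3),
      MeasureTheory.integral_sub h2 hT2int, MeasureTheory.integral_neg,
      MeasureTheory.integral_const_mul, hT1zero, hT2eq]
    ring
  -- fluid energy derivative value
  have hUBint : Integrable (fun x : E3 =>
      (⟪u (t, x), fderiv ℝ (fun y => u (t, y)) x (u (t, x))⟫ : ℝ)) := by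
    refine integrable_csupp' ?_ Ku hKu ?_
    · exact hUc1.continuous.inner (cDU.clm_apply hUc1.continuous)
    · intro x hx
      rw [(husupp t x hx).1]
      simp
  have hUGint : Integrable (fun x : E3 =>
      (⟪u (t, x), gradient (fun y => P (t, y)) x⟫ : ℝ)) := by
    refine integrable_csupp' ?_ Ku hKu ?_
    · refine hUc1.continuous.inner ?_
      exact (InnerProductSpace.toDual ℝ E3).symm.continuous.comp
        (hPt.continuous_fderiv one_ne_zero)
    · intro x hx
      rw [(husupp t x hx).1]
      simp
  have haH : Integrable (fun x : E3 =>
      ∫ v : E3, f (t, x, v) * ⟪u (t, x), v - u (t, x)⟫) :=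
    hHint.integral_prod_left
  have hFluid : (∫ x : E3, (⟪u (t, x), fderiv ℝ u (t, x) (1, 0)⟫ : ℝ))
      = (∫ p : E3 × E3, f (t, p.1, p.2) * ⟪u (t, p.1), p.2 - u (t, p.1)⟫
          ∂((volume : Measure E3).prod volume))
        - ∫ x : E3, ∑ i : Fin 3,
            ‖fderiv ℝ (fun y => u (t, y)) x (EuclideanSpace.single i 1)‖ ^ 2 := by
    have hpt : (fun x : E3 => (⟪u (t, x), fderiv ℝ u (t, x) (1, 0)⟫ : ℝ))
        = fun x : E3 => ((∫ v : E3, f (t, x, v) * ⟪u (t, x), v - u (t, x)⟫)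
            - ⟪u (t, x), fderiv ℝ (fun y => u (t, y)) x (u (t, x))⟫
            + ⟪u (t, x), ∑ i : Fin 3, fderiv ℝ
                (fun y => fderiv ℝ (fun y' => u (t, y')) y (EuclideanSpace.single i 1))
                x (EuclideanSpace.single i 1)⟫)
            - ⟪u (t, x), gradient (fun y => P (t, y)) x⟫ := by
      funext x
      rw [hNSpt x, inner_sub_right, inner_add_right, inner_sub_right, hinnerS x]
    have h2 : Integrable (fun x : E3 =>
        (∫ v : E3, f (t, x, v) * ⟪u (t, x), v - u (t, x)⟫)
          - ⟪u (t, x), fderiv ℝ (fun y => u (t, y)) x (u (t, x))⟫) := haH.sub hUBint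
    have h1 : Integrable (fun x : E3 =>
        (∫ v : E3, f (t, x, v) * ⟪u (t, x), v - u (t, x)⟫)
          - ⟪u (t, x), fderiv ℝ (fun y => u (t, y)) x (u (t, x))⟫
          + ⟪u (t, x), ∑ i : Fin 3, fderiv ℝ
              (fun y => fderiv ℝ (fun y' => u (t, y')) y (EuclideanSpace.single i 1))
              x (EuclideanSpace.single i 1)⟫) := h2.add hUDint
    rw [hpt, MeasureTheory.integral_sub h1 hUGint,
      MeasureTheory.integral_add h2 hUDint,
      MeasureTheory.integral_sub haH hUBint, hBzero, hGzero, hDeltaEq]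
    rw [show (∫ x : E3, ∫ v : E3, f (t, x, v) * ⟪u (t, x), v - u (t, x)⟫)
        = ∫ p : E3 × E3, f (t, p.1, p.2) * ⟪u (t, p.1), p.2 - u (t, p.1)⟫
          ∂((volume : Measure E3).prod volume) from (MeasureTheory.integral_prod _ hHint).symm]
    ring
  -- combining the two inner-product integrals
  have hHT4 : (∫ p : E3 × E3, f (t, p.1, p.2) * ⟪u (t, p.1), p.2 - u (t, p.1)⟫
        ∂((volume : Measure E3).prod volume))
      + (∫ p : E3 × E3, ⟪p.2, u (t, p.1) - p.2⟫ * f (t, p.1, p.2)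
        ∂((volume : Measure E3).prod volume))
      = - ∫ p : E3 × E3, ‖u (t, p.1) - p.2‖ ^ 2 * f (t, p.1, p.2)
          ∂((volume : Measure E3).prod volume) := by
    rw [← MeasureTheory.integral_add hHint hT4int]
    have hinn : ∀ c v : E3, (⟪c, v - c⟫ : ℝ) + ⟪v, c - v⟫ = -‖c - v‖ ^ 2 := by
      intro c v
      have h1 : (⟪c, v - c⟫ : ℝ) = -⟪c, c - v⟫ := by
        rw [show v - c = -(c - v) from by abel, inner_neg_right]
      rw [h1, ← real_inner_self_eq_norm_sq]
      have h2 : (⟪v, c - v⟫ : ℝ) - ⟪c, c - v⟫ = ⟪v - c, c - v⟫ := (inner_sub_left _ _ _).symm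
      have h3 : (⟪v - c, c - v⟫ : ℝ) = -⟪c - v, c - v⟫ := by
        rw [show v - c = -(c - v) from by abel, inner_neg_left]
      linarith
    have hfn : (fun p : E3 × E3 => f (t, p.1, p.2) * ⟪u (t, p.1), p.2 - u (t, p.1)⟫
          + ⟪p.2, u (t, p.1) - p.2⟫ * f (t, p.1, p.2))
        = fun p : E3 × E3 => -(‖u (t, p.1) - p.2‖ ^ 2 * f (t, p.1, p.2)) := by
      funext p
      have := hinn (u (t, p.1)) p.2
      linear_combination f (t, p.1, p.2) * this
    rw [hfn, MeasureTheory.integral_neg]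
  -- final value identity
  have hval : (1 / 2 : ℝ) * (∫ x : E3, 2 * ⟪u (t, x), fderiv ℝ u (t, x) (1, 0)⟫)
      + (1 / 2 : ℝ) * (∫ p : E3 × E3, ‖p.2‖ ^ 2 * fderiv ℝ f (t, p.1, p.2) (1, 0, 0))
      = -((∫ x : E3, ∑ j : Fin 3,
            ‖fderiv ℝ (fun y => u (t, y)) x (EuclideanSpace.single j 1)‖ ^ 2)
          + ∫ x : E3, ∫ v : E3, ‖u (t, x) - v‖ ^ 2 * f (t, x, v)) := by
    rw [MeasureTheory.integral_const_mul]
    rw [show (∫ p : E3 × E3, ‖p.2‖ ^ 2 * fderiv ℝ f (t, p.1, p.2) (1, 0, 0))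
        = ∫ p : E3 × E3, ‖p.2‖ ^ 2 * fderiv ℝ f (t, p.1, p.2) (1, 0, 0)
          ∂((volume : Measure E3).prod volume) from by rw [hvol]]
    rw [hKin, hFluid]
    rw [show (∫ x : E3, ∫ v : E3, ‖u (t, x) - v‖ ^ 2 * f (t, x, v))
        = ∫ p : E3 × E3, ‖u (t, p.1) - p.2‖ ^ 2 * f (t, p.1, p.2)
          ∂((volume : Measure E3).prod volume) from (MeasureTheory.integral_prod _ hT5int).symm]
    have := hHT4
    ring_nf
    ring_nf at this
    linarith
  -- conclusion
  have hder := (hder1.const_mul ((1 : ℝ) / 2)).add (hder2.const_mul ((1 : ℝ) / 2))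
  have hfunEq : (fun s => (1 / 2 : ℝ) * (∫ x : E3, ‖u (s, x)‖ ^ 2)
        + (1 / 2 : ℝ) * (∫ x : E3, ∫ v : E3, ‖v‖ ^ 2 * f (s, x, v)))
      = (fun s => (1 / 2 : ℝ) * (∫ x : E3, ‖u (s, x)‖ ^ 2)
        + (1 / 2 : ℝ) * (∫ p : E3 × E3, ‖p.2‖ ^ 2 * f (s, p.1, p.2))) := by
    funext s
    congr 1
    congr 1
    have hs3 : Integrable (fun p : E3 × E3 => ‖p.2‖ ^ 2 * f (s, p.1, p.2))
        ((volume : Measure E3).prod volume) := by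
      refine mkint _ ((continuous_snd.norm.pow 2).mul
        (hf.continuous.comp (continuous_const.prodMk continuous_id))) ?_
      intro p hp
      rw [hfsupp s p.1 p.2 hp]
      ring
    rw [show (∫ p : E3 × E3, ‖p.2‖ ^ 2 * f (s, p.1, p.2))
        = ∫ p : E3 × E3, ‖p.2‖ ^ 2 * f (s, p.1, p.2)
          ∂((volume : Measure E3).prod volume) from by rw [hvol]]
    exact (MeasureTheory.integral_prod _ hs3).symm
  rw [hfunEq, ← hval]
  exact hder
end
end

section
/- There exists a constant C > 0 such that for every twice continuously differentiable u : ℝ³ → ℝ with compact support: ‖∇u‖_{L²(ℝ³)} ≤ C·‖∇²u‖_{L²(ℝ³)}^{5/7}·‖u‖_{L¹(ℝ³)}^{2/7}. -/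
open MeasureTheory
open scoped NNReal ENNReal RealInnerProductSpace

noncomputable section

/-- Interpolation inequality `‖∇u‖_{L²} ≲ ‖∇²u‖_{L²}^{5/7} ‖u‖_{L¹}^{2/7}`, i.e.
`‖∇u‖_{L²} ≲ ‖∇²u‖_{L²}^{θ} ‖u‖_{Ḃ^{-3/2}_{2,∞}}^{1-θ}` with `θ = 5/7` after the critical
embedding `L¹(ℝ³) ↪ Ḃ^{-3/2}_{2,∞}(ℝ³)`; the Hessian is measured in the Frobenius norm. -/
theorem stmt18 : ∃ C > 0, ∀ u : E3 → ℝ, ContDiff ℝ 2 u → HasCompactSupport u →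
    (∫ x : E3, ‖gradient u x‖ ^ 2) ^ ((1 : ℝ) / 2)
      ≤ C * ((∫ x : E3, ∑ i : Fin 3, ∑ j : Fin 3,
              (fderiv ℝ (fun y => fderiv ℝ u y (EuclideanSpace.single j 1)) x
                (EuclideanSpace.single i 1)) ^ 2) ^ ((1 : ℝ) / 2)) ^ ((5 : ℝ) / 7) *
          (∫ x : E3, |u x|) ^ ((2 : ℝ) / 7) := by
  classical
  set C₀ : ℝ := ((SNormLESNormFDerivOfEqConst (F := ℝ) (volume : Measure E3) 2 : ℝ≥0) : ℝ) with hC₀def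
  have hC₀ : 0 ≤ C₀ := by rw [hC₀def]; positivity
  set K : ℝ := 3 * C₀ ^ ((3:ℝ)/5) with hKdef
  have hK : 0 ≤ K := by positivity
  refine ⟨max 1 (K ^ ((5:ℝ)/7)), lt_of_lt_of_le one_pos (le_max_left _ _), ?_⟩
  intro u hu hsupp
  have hu1 : ContDiff ℝ 1 u := hu.of_le (by norm_num)
  have hud : Differentiable ℝ u := hu1.differentiable one_ne_zero
  have hcu : Continuous u := hu1.continuous
  have hfd1 : ContDiff ℝ 1 (fderiv ℝ u) := hu.fderiv_right (m := 1) (by norm_num)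
  have hfdsupp : HasCompactSupport (fderiv ℝ u) := hsupp.fderiv ℝ
  -- first directional derivatives
  have hdj : ∀ j : Fin 3, ContDiff ℝ 1 (fun x => fderiv ℝ u x (EuclideanSpace.single j 1)) :=
    fun j => hfd1.clm_apply (contDiff_const (c := EuclideanSpace.single j 1))
  have hdsupp : ∀ j : Fin 3,
      HasCompactSupport (fun x => fderiv ℝ u x (EuclideanSpace.single j 1)) := by
    intro j
    exact hsupp.fderiv_apply ℝ (EuclideanSpace.single j 1)
  -- second directional derivatives
  have hddcont : ∀ i j : Fin 3, Continuous (fun x =>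
      fderiv ℝ (fun y => fderiv ℝ u y (EuclideanSpace.single j 1)) x (EuclideanSpace.single i 1)) :=
    fun i j => (((hdj j).fderiv_right (m := 0) (by norm_num)).clm_apply contDiff_const).continuous
  have hddsupp : ∀ i j : Fin 3, HasCompactSupport (fun x =>
      fderiv ℝ (fun y => fderiv ℝ u y (EuclideanSpace.single j 1)) x
        (EuclideanSpace.single i 1)) := by
    intro i j
    exact (hdsupp j).fderiv_apply ℝ (EuclideanSpace.single i 1)
  -- key quantities
  set A : ℝ := ∫ x : E3, ‖gradient u x‖ ^ 2 with hAdef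
  set B : ℝ := ∫ x : E3, ∑ i : Fin 3, ∑ j : Fin 3,
      (fderiv ℝ (fun y => fderiv ℝ u y (EuclideanSpace.single j 1)) x
        (EuclideanSpace.single i 1)) ^ 2 with hBdef
  set I1 : ℝ := ∫ x : E3, |u x| with hI1def
  set I2 : ℝ := ∫ x : E3, (u x) ^ 2 with hI2def
  set I6 : ℝ := ∫ x : E3, ‖u x‖ ^ (6:ℝ) with hI6def
  have hI1 : 0 ≤ I1 := integral_nonneg fun x => abs_nonneg _
  have hI2 : 0 ≤ I2 := integral_nonneg fun x => sq_nonneg _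
  have hI6 : 0 ≤ I6 := integral_nonneg fun x => Real.rpow_nonneg (norm_nonneg _) _
  have hA : 0 ≤ A := integral_nonneg fun x => sq_nonneg _
  have hB : 0 ≤ B := integral_nonneg fun x =>
    Finset.sum_nonneg fun i _ => Finset.sum_nonneg fun j _ => sq_nonneg _

  -- basic integrability helper
  have hmulint : ∀ (f g : E3 → ℝ), Continuous f → Continuous g → HasCompactSupport g →
      Integrable (fun x => f x * g x) volume := by
    intro f g hf hg hgs
    exact (hf.mul hg).integrable_of_hasCompactSupport hgs.mul_left
  -- pointwise identity for the gradient norm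
  have hgradsq : ∀ x : E3, ‖gradient u x‖ ^ 2
      = ∑ i : Fin 3, (fderiv ℝ u x (EuclideanSpace.single i 1)) ^ 2 := by
    intro x
    have h2 : ∀ i : Fin 3, fderiv ℝ u x (EuclideanSpace.single i 1) = gradient u x i := by
      intro i
      calc fderiv ℝ u x (EuclideanSpace.single i 1)
          = ⟪(InnerProductSpace.toDual ℝ E3).symm (fderiv ℝ u x),
              EuclideanSpace.single i (1:ℝ)⟫ := (InnerProductSpace.toDual_symm_apply).symm
        _ = gradient u x i := by
            rw [EuclideanSpace.inner_single_right]; simp [gradient]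
    rw [EuclideanSpace.norm_eq, Real.sq_sqrt (Finset.sum_nonneg fun i _ => sq_nonneg _)]
    refine Finset.sum_congr rfl fun i _ => ?_
    rw [h2 i]
    simp [Real.norm_eq_abs, sq_abs]
  -- Step 1: A = ∑ᵢ ∫ (∂ᵢ u)²
  have hdint : ∀ i : Fin 3,
      Integrable (fun x : E3 => (fderiv ℝ u x (EuclideanSpace.single i 1)) ^ 2) volume := by
    intro i
    have := hmulint _ _ (hdj i).continuous (hdj i).continuous (hdsupp i)
    simpa [sq] using this
  have hAsum : A = ∑ i : Fin 3, ∫ x : E3, (fderiv ℝ u x (EuclideanSpace.single i 1)) ^ 2 := by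
    rw [hAdef]
    rw [show (fun x : E3 => ‖gradient u x‖ ^ 2)
        = fun x : E3 => ∑ i : Fin 3, (fderiv ℝ u x (EuclideanSpace.single i 1)) ^ 2 from
      funext hgradsq]
    exact integral_finset_sum _ fun i _ => hdint i
  -- Step 2: integration by parts
  have parts : ∀ i : Fin 3, ∫ x : E3, (fderiv ℝ u x (EuclideanSpace.single i 1)) ^ 2
      = - ∫ x : E3, (fderiv ℝ (fun y => fderiv ℝ u y (EuclideanSpace.single i 1)) x
          (EuclideanSpace.single i 1)) * u x := by
    intro i
    have h := integral_mul_fderiv_eq_neg_fderiv_mul_of_integrable (μ := (volume : Measure E3))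
      (f := fun x => fderiv ℝ u x (EuclideanSpace.single i 1)) (g := u)
      (v := EuclideanSpace.single i 1)
      (hmulint _ _ (hddcont i i) hcu hsupp)
      (by simpa [sq] using hmulint _ _ (hdj i).continuous (hdj i).continuous (hdsupp i))
      (hmulint _ _ (hdj i).continuous hcu hsupp)
      (fun x _ => (hdj i).differentiable one_ne_zero x) (fun x _ => hud x)
    simpa [sq] using h
  -- the diagonal second derivatives are bounded by B in L²
  have hBint : Integrable (fun x : E3 => ∑ i : Fin 3, ∑ j : Fin 3,
      (fderiv ℝ (fun y => fderiv ℝ u y (EuclideanSpace.single j 1)) x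
        (EuclideanSpace.single i 1)) ^ 2) volume := by
    refine integrable_finset_sum _ fun i _ => integrable_finset_sum _ fun j _ => ?_
    simpa [sq] using hmulint _ _ (hddcont i j) (hddcont i j) (hddsupp i j)
  have hddL2 : ∀ i : Fin 3,
      (∫ x : E3, (fderiv ℝ (fun y => fderiv ℝ u y (EuclideanSpace.single i 1)) x
          (EuclideanSpace.single i 1)) ^ 2) ≤ B := by
    intro i
    rw [hBdef]
    have hint1 : Integrable (fun x : E3 =>
        (fderiv ℝ (fun y => fderiv ℝ u y (EuclideanSpace.single i 1)) x
          (EuclideanSpace.single i 1)) ^ 2) volume := by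
      simpa [sq] using hmulint _ _ (hddcont i i) (hddcont i i) (hddsupp i i)
    refine integral_mono hint1 hBint fun x => ?_
    calc (fderiv ℝ (fun y => fderiv ℝ u y (EuclideanSpace.single i 1)) x
            (EuclideanSpace.single i 1)) ^ 2
        ≤ ∑ j : Fin 3, (fderiv ℝ (fun y => fderiv ℝ u y (EuclideanSpace.single j 1)) x
            (EuclideanSpace.single i 1)) ^ 2 :=
          Finset.single_le_sum (f := fun j => (fderiv ℝ
            (fun y => fderiv ℝ u y (EuclideanSpace.single j 1)) x
            (EuclideanSpace.single i 1)) ^ 2) (fun j _ => sq_nonneg _) (Finset.mem_univ i)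
      _ ≤ ∑ i' : Fin 3, ∑ j : Fin 3, (fderiv ℝ
            (fun y => fderiv ℝ u y (EuclideanSpace.single j 1)) x
            (EuclideanSpace.single i' 1)) ^ 2 :=
          Finset.single_le_sum (f := fun i' => ∑ j : Fin 3, (fderiv ℝ
            (fun y => fderiv ℝ u y (EuclideanSpace.single j 1)) x
            (EuclideanSpace.single i' 1)) ^ 2)
            (fun i' _ => Finset.sum_nonneg fun j _ => sq_nonneg _) (Finset.mem_univ i)
  -- Step 3: Cauchy–Schwarz on each term
  have hconj22 : Real.HolderConjugate 2 2 := Real.holderConjugate_iff.mpr ⟨one_lt_two, by norm_num⟩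
  have hCS : ∀ i : Fin 3,
      (- ∫ x : E3, (fderiv ℝ (fun y => fderiv ℝ u y (EuclideanSpace.single i 1)) x
          (EuclideanSpace.single i 1)) * u x)
        ≤ B ^ ((1:ℝ)/2) * I2 ^ ((1:ℝ)/2) := by
    intro i
    have h1 : (- ∫ x : E3, (fderiv ℝ (fun y => fderiv ℝ u y (EuclideanSpace.single i 1)) x
          (EuclideanSpace.single i 1)) * u x)
        ≤ ∫ x : E3, |fderiv ℝ (fun y => fderiv ℝ u y (EuclideanSpace.single i 1)) x
          (EuclideanSpace.single i 1)| * |u x| := by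
      refine le_trans (neg_le_abs _) ?_
      have hn := norm_integral_le_integral_norm (μ := (volume : Measure E3))
        (f := fun x : E3 => (fderiv ℝ (fun y => fderiv ℝ u y (EuclideanSpace.single i 1)) x
          (EuclideanSpace.single i 1)) * u x)
      simp only [Real.norm_eq_abs, abs_mul] at hn
      exact hn
    refine h1.trans ?_
    have hmemdd : MemLp (fun x : E3 => |fderiv ℝ
        (fun y => fderiv ℝ u y (EuclideanSpace.single i 1)) x
        (EuclideanSpace.single i 1)|) (ENNReal.ofReal 2) volume :=
      ((hddcont i i).abs).memLp_of_hasCompactSupport ((hddsupp i i).abs)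
    have hmemu : MemLp (fun x : E3 => |u x|) (ENNReal.ofReal 2) volume :=
      (hcu.abs).memLp_of_hasCompactSupport hsupp.abs
    have h2 := integral_mul_le_Lp_mul_Lq_of_nonneg hconj22
      (Filter.Eventually.of_forall fun x => abs_nonneg _)
      (Filter.Eventually.of_forall fun x => abs_nonneg _) hmemdd hmemu
    refine h2.trans ?_
    have e1 : (∫ x : E3, |fderiv ℝ (fun y => fderiv ℝ u y (EuclideanSpace.single i 1)) x
        (EuclideanSpace.single i 1)| ^ (2:ℝ))
        = ∫ x : E3, (fderiv ℝ (fun y => fderiv ℝ u y (EuclideanSpace.single i 1)) x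
        (EuclideanSpace.single i 1)) ^ 2 := by
      refine integral_congr_ae (Filter.Eventually.of_forall fun x => ?_)
      simp only [Real.rpow_two, sq_abs]
    have e2 : (∫ x : E3, |u x| ^ (2:ℝ)) = I2 := by
      rw [hI2def]
      refine integral_congr_ae (Filter.Eventually.of_forall fun x => ?_)
      simp only [Real.rpow_two, sq_abs]
    rw [e1, e2]
    exact mul_le_mul_of_nonneg_right
      (Real.rpow_le_rpow (integral_nonneg fun x => sq_nonneg _) (hddL2 i) (by norm_num))
      (Real.rpow_nonneg hI2 _)
  -- combining: A ≤ 3 B^(1/2) I2^(1/2)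
  have hA3 : A ≤ 3 * (B ^ ((1:ℝ)/2) * I2 ^ ((1:ℝ)/2)) := by
    rw [hAsum]
    calc ∑ i : Fin 3, ∫ x : E3, (fderiv ℝ u x (EuclideanSpace.single i 1)) ^ 2
        ≤ ∑ _i : Fin 3, B ^ ((1:ℝ)/2) * I2 ^ ((1:ℝ)/2) := by
          refine Finset.sum_le_sum fun i _ => ?_
          rw [parts i]; exact hCS i
      _ = 3 * (B ^ ((1:ℝ)/2) * I2 ^ ((1:ℝ)/2)) := by
          simp [Finset.sum_const]

  -- Step 4: Sobolev inequality ‖u‖₆ ≤ C₀ ‖∇u‖₂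
  have sob : I6 ^ ((1:ℝ)/6) ≤ C₀ * A ^ ((1:ℝ)/2) := by
    have hmem6 : MemLp u (((6:ℝ≥0) : ℝ≥0∞)) volume := hcu.memLp_of_hasCompactSupport hsupp
    have hmem2 : MemLp (fderiv ℝ u) (((2:ℝ≥0) : ℝ≥0∞)) volume :=
      hfd1.continuous.memLp_of_hasCompactSupport hfdsupp
    have key := eLpNorm_le_eLpNorm_fderiv_of_eq (μ := (volume : Measure E3)) (F := ℝ)
      hu1 hsupp (p := 2) (p' := 6) (by norm_num) (by simp [finrank_euclideanSpace_fin])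
      (by rw [finrank_euclideanSpace_fin]; norm_num)
    rw [MemLp.eLpNorm_eq_integral_rpow_norm (by norm_num) (by norm_num) hmem6,
        MemLp.eLpNorm_eq_integral_rpow_norm (by norm_num) (by norm_num) hmem2] at key
    simp only [ENNReal.coe_toReal] at key
    have hAeq : (∫ a : E3, ‖fderiv ℝ u a‖ ^ (((2:ℝ≥0)):ℝ)) = A := by
      rw [hAdef]
      refine integral_congr_ae (Filter.Eventually.of_forall fun x => ?_)
      have hne : ‖gradient u x‖ = ‖fderiv ℝ u x‖ :=
        LinearIsometryEquiv.norm_map (InnerProductSpace.toDual ℝ E3).symm (fderiv ℝ u x)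
      beta_reduce
      rw [show (((2:ℝ≥0)):ℝ) = (2:ℝ) by norm_num, Real.rpow_two, hne]
    have hI6eq : (∫ a : E3, ‖u a‖ ^ (((6:ℝ≥0)):ℝ)) = I6 := by
      rw [hI6def]
      refine integral_congr_ae (Filter.Eventually.of_forall fun x => ?_)
      norm_num
    rw [hAeq, hI6eq] at key
    have hrhs_ne : ((SNormLESNormFDerivOfEqConst (F := ℝ) (volume : Measure E3) 2 : ℝ≥0) : ℝ≥0∞)
        * ENNReal.ofReal (A ^ (((2:ℝ≥0)):ℝ)⁻¹) ≠ ⊤ :=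
      ENNReal.mul_ne_top ENNReal.coe_ne_top ENNReal.ofReal_ne_top
    have h := ENNReal.toReal_mono hrhs_ne key
    rw [ENNReal.toReal_ofReal (Real.rpow_nonneg hI6 _), ENNReal.toReal_mul,
        ENNReal.coe_toReal, ENNReal.toReal_ofReal (Real.rpow_nonneg hA _)] at h
    calc I6 ^ ((1:ℝ)/6) = I6 ^ (((6:ℝ≥0)):ℝ)⁻¹ := by norm_num
      _ ≤ C₀ * A ^ (((2:ℝ≥0)):ℝ)⁻¹ := h
      _ = C₀ * A ^ ((1:ℝ)/2) := by norm_num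
  -- Step 5: Hölder interpolation I2 ≤ I1^(4/5) I6^(1/5)
  have interp : I2 ≤ I1 ^ ((4:ℝ)/5) * I6 ^ ((1:ℝ)/5) := by
    have hconj : Real.HolderConjugate (5/4) 5 := Real.holderConjugate_iff.mpr ⟨by norm_num, by norm_num⟩
    have habs : HasCompactSupport (fun x : E3 => |u x|) := hsupp.abs
    have hmemf : MemLp (fun x : E3 => |u x| ^ ((4:ℝ)/5)) (ENNReal.ofReal (5/4)) volume := by
      apply Continuous.memLp_of_hasCompactSupport
      · exact hcu.abs.rpow_const fun x => Or.inr (by norm_num)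
      · exact habs.comp_left (g := fun t : ℝ => t ^ ((4:ℝ)/5)) (Real.zero_rpow (by norm_num))
    have hmemg : MemLp (fun x : E3 => |u x| ^ ((6:ℝ)/5)) (ENNReal.ofReal 5) volume := by
      apply Continuous.memLp_of_hasCompactSupport
      · exact hcu.abs.rpow_const fun x => Or.inr (by norm_num)
      · exact habs.comp_left (g := fun t : ℝ => t ^ ((6:ℝ)/5)) (Real.zero_rpow (by norm_num))
    have h := integral_mul_le_Lp_mul_Lq_of_nonneg hconj
      (Filter.Eventually.of_forall fun x => Real.rpow_nonneg (abs_nonneg _) _)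
      (Filter.Eventually.of_forall fun x => Real.rpow_nonneg (abs_nonneg _) _) hmemf hmemg
    have e0 : (∫ x : E3, |u x| ^ ((4:ℝ)/5) * |u x| ^ ((6:ℝ)/5)) = I2 := by
      rw [hI2def]
      refine integral_congr_ae (Filter.Eventually.of_forall fun x => ?_)
      beta_reduce
      rw [← Real.rpow_add' (abs_nonneg _) (by norm_num : (4:ℝ)/5 + 6/5 ≠ 0)]
      norm_num [Real.rpow_two, sq_abs]
    have e1 : (∫ x : E3, (|u x| ^ ((4:ℝ)/5)) ^ (5/4:ℝ)) = I1 := by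
      rw [hI1def]
      refine integral_congr_ae (Filter.Eventually.of_forall fun x => ?_)
      beta_reduce
      rw [← Real.rpow_mul (abs_nonneg _)]
      norm_num
    have e2 : (∫ x : E3, (|u x| ^ ((6:ℝ)/5)) ^ (5:ℝ)) = I6 := by
      rw [hI6def]
      refine integral_congr_ae (Filter.Eventually.of_forall fun x => ?_)
      beta_reduce
      rw [← Real.rpow_mul (abs_nonneg _)]
      norm_num [Real.norm_eq_abs]
    rw [e0, e1, e2] at h
    calc I2 ≤ I1 ^ (1/(5/4:ℝ)) * I6 ^ (1/(5:ℝ)) := h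
      _ = I1 ^ ((4:ℝ)/5) * I6 ^ ((1:ℝ)/5) := by norm_num
  -- Final combination
  clear_value A B I1 I2 I6 K C₀
  rcases eq_or_lt_of_le hA with hA0 | hApos
  · rw [← hA0, Real.zero_rpow (by norm_num)]
    have h1 : (0:ℝ) ≤ (B ^ ((1:ℝ)/2)) ^ ((5:ℝ)/7) := Real.rpow_nonneg (Real.rpow_nonneg hB _) _
    have h2 : (0:ℝ) ≤ I1 ^ ((2:ℝ)/7) := Real.rpow_nonneg hI1 _
    have h3 : (0:ℝ) ≤ max 1 (K ^ ((5:ℝ)/7)) := le_trans zero_le_one (le_max_left _ _)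
    exact mul_nonneg (mul_nonneg h3 h1) h2
  · have i2half : I2 ^ ((1:ℝ)/2) ≤ I1 ^ ((2:ℝ)/5) * I6 ^ ((1:ℝ)/10) := by
      calc I2 ^ ((1:ℝ)/2) ≤ (I1 ^ ((4:ℝ)/5) * I6 ^ ((1:ℝ)/5)) ^ ((1:ℝ)/2) :=
            Real.rpow_le_rpow hI2 interp (by norm_num)
        _ = I1 ^ ((2:ℝ)/5) * I6 ^ ((1:ℝ)/10) := by
            rw [Real.mul_rpow (Real.rpow_nonneg hI1 _) (Real.rpow_nonneg hI6 _),
              ← Real.rpow_mul hI1, ← Real.rpow_mul hI6]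
            norm_num
    have i6tenth : I6 ^ ((1:ℝ)/10) ≤ C₀ ^ ((3:ℝ)/5) * A ^ ((3:ℝ)/10) := by
      have h := Real.rpow_le_rpow (Real.rpow_nonneg hI6 _) sob (by norm_num : (0:ℝ) ≤ 3/5)
      rw [← Real.rpow_mul hI6, Real.mul_rpow hC₀ (Real.rpow_nonneg hA _),
        ← Real.rpow_mul hA] at h
      calc I6 ^ ((1:ℝ)/10) = I6 ^ ((1:ℝ)/6 * (3/5)) := by norm_num
        _ ≤ C₀ ^ ((3:ℝ)/5) * A ^ ((1:ℝ)/2 * (3/5)) := h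
        _ = C₀ ^ ((3:ℝ)/5) * A ^ ((3:ℝ)/10) := by norm_num
    have hstep : A ≤ K * (B ^ ((1:ℝ)/2) * I1 ^ ((2:ℝ)/5)) * A ^ ((3:ℝ)/10) := by
      calc A ≤ 3 * (B ^ ((1:ℝ)/2) * I2 ^ ((1:ℝ)/2)) := hA3
        _ ≤ 3 * (B ^ ((1:ℝ)/2) * (I1 ^ ((2:ℝ)/5) * I6 ^ ((1:ℝ)/10))) := by
            have := mul_le_mul_of_nonneg_left i2half (Real.rpow_nonneg hB ((1:ℝ)/2))
            nlinarith [this]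
        _ ≤ 3 * (B ^ ((1:ℝ)/2) * (I1 ^ ((2:ℝ)/5) * (C₀ ^ ((3:ℝ)/5) * A ^ ((3:ℝ)/10)))) := by
            have h0 : (0:ℝ) ≤ B ^ ((1:ℝ)/2) * I1 ^ ((2:ℝ)/5) :=
              mul_nonneg (Real.rpow_nonneg hB _) (Real.rpow_nonneg hI1 _)
            nlinarith [mul_le_mul_of_nonneg_left i6tenth h0]
        _ = K * (B ^ ((1:ℝ)/2) * I1 ^ ((2:ℝ)/5)) * A ^ ((3:ℝ)/10) := by
            rw [hKdef]; ring
    have hX : (0:ℝ) ≤ B ^ ((1:ℝ)/2) * I1 ^ ((2:ℝ)/5) :=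
      mul_nonneg (Real.rpow_nonneg hB _) (Real.rpow_nonneg hI1 _)
    have h710 : A ^ ((7:ℝ)/10) ≤ K * (B ^ ((1:ℝ)/2) * I1 ^ ((2:ℝ)/5)) := by
      have hA310 : 0 < A ^ ((3:ℝ)/10) := Real.rpow_pos_of_pos hApos _
      refine le_of_mul_le_mul_right ?_ hA310
      calc A ^ ((7:ℝ)/10) * A ^ ((3:ℝ)/10) = A := by
            rw [← Real.rpow_add hApos]; norm_num
        _ ≤ K * (B ^ ((1:ℝ)/2) * I1 ^ ((2:ℝ)/5)) * A ^ ((3:ℝ)/10) := hstep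
    calc A ^ ((1:ℝ)/2) = (A ^ ((7:ℝ)/10)) ^ ((5:ℝ)/7) := by
          rw [← Real.rpow_mul hA]; norm_num
      _ ≤ (K * (B ^ ((1:ℝ)/2) * I1 ^ ((2:ℝ)/5))) ^ ((5:ℝ)/7) :=
          Real.rpow_le_rpow (Real.rpow_nonneg hA _) h710 (by norm_num)
      _ = K ^ ((5:ℝ)/7) * ((B ^ ((1:ℝ)/2)) ^ ((5:ℝ)/7) * I1 ^ ((2:ℝ)/7)) := by
          rw [Real.mul_rpow hK hX,
            Real.mul_rpow (Real.rpow_nonneg hB _) (Real.rpow_nonneg hI1 _),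
            ← Real.rpow_mul hI1, show (2:ℝ)/5 * ((5:ℝ)/7) = 2/7 from by norm_num]
      _ ≤ max 1 (K ^ ((5:ℝ)/7)) * ((B ^ ((1:ℝ)/2)) ^ ((5:ℝ)/7) * I1 ^ ((2:ℝ)/7)) := by
          refine mul_le_mul_of_nonneg_right (le_max_right _ _) ?_
          exact mul_nonneg (Real.rpow_nonneg (Real.rpow_nonneg hB _) _) (Real.rpow_nonneg hI1 _)
      _ = max 1 (K ^ ((5:ℝ)/7)) * (B ^ ((1:ℝ)/2)) ^ ((5:ℝ)/7) * I1 ^ ((2:ℝ)/7) := by ring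
end
end
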